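/- arXiv:2310.06203 — 4 statements merged into one kernel-verified Lean document; each statement's English description precedes it below -/
import Mathlib

section
/- For a prime p, a connected circulant graph G(p;S) with symbol set S ⊆ {1,...,p-1}, S = -S mod p, is strongly regular if and only if p ≡ 1 (mod 4) and S is either the set of all nonzero quadratic residues modulo p or the set of all quadratic non-residues modulo p. -/
open Polynomial
open scoped Classical

/-- The circulant graph `G(n;S)`: vertices `ℤ_n`, `i ~ j` iff `i ≠ j` and `i - j ∈ S`
(for a symbol set with `S = -S` this agrees with `fromRel`). -/
def circGraph (n : ℕ) (S : Set (ZMod n)) : SimpleGraph (ZMod n) :=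
  SimpleGraph.fromRel (fun i j => i - j ∈ S)

/-- The adjacency matrix of a graph, over `ℂ`. -/
noncomputable def adjMat {V : Type*} [Fintype V] (G : SimpleGraph V) : Matrix V V ℂ :=
  Matrix.of fun i j => if G.Adj i j then 1 else 0

/-! ### Auxiliary definitions -/

noncomputable def eeg2 {R : Type*} [CommRing R] (p : ℕ) [NeZero p] (ζ : R) (x : ZMod p) : R :=
  ζ ^ x.val

noncomputable def lamg {R : Type*} [CommRing R] (p : ℕ) [NeZero p] (ζ : R)
    (S' : Finset (ZMod p)) (k : ZMod p) : R :=
  ∑ s ∈ S', eeg2 p ζ (k * s)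

lemma eeg2_natCast {R : Type*} [CommRing R] {p : ℕ} [NeZero p] {ζ : R} (hζ : ζ ^ p = 1)
    (m : ℕ) : ζ ^ m = eeg2 p ζ (m : ZMod p) := by
  unfold eeg2
  rw [ZMod.val_natCast]
  conv_lhs => rw [← Nat.div_add_mod m p, pow_add, pow_mul, hζ, one_pow, one_mul]

lemma eeg2_add {R : Type*} [CommRing R] {p : ℕ} [NeZero p] {ζ : R} (hζ : ζ ^ p = 1)
    (x y : ZMod p) : eeg2 p ζ (x + y) = eeg2 p ζ x * eeg2 p ζ y := by
  have hx : ((x.val : ℕ) : ZMod p) = x := by simp [ZMod.natCast_val, ZMod.cast_id]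
  have hy : ((y.val : ℕ) : ZMod p) = y := by simp [ZMod.natCast_val, ZMod.cast_id]
  have hxy : x + y = ((x.val + y.val : ℕ) : ZMod p) := by push_cast [hx, hy]; ring
  rw [hxy, ← eeg2_natCast hζ, pow_add]
  rfl

section Sums
variable {p : ℕ} [hpf : Fact p.Prime] {ζ : ℂ}

lemma sum_eeg2 (hζ : IsPrimitiveRoot ζ p) : ∑ k : ZMod p, eeg2 p ζ k = 0 := by
  have h2 : 1 < p := hpf.out.one_lt
  have : ∑ k : ZMod p, eeg2 p ζ k = ∑ i ∈ Finset.range p, ζ ^ i := by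
    refine Finset.sum_nbij' (fun k => k.val) (fun i => (i : ZMod p)) ?_ ?_ ?_ ?_ ?_
    · intro k _; exact Finset.mem_range.2 (ZMod.val_lt k)
    · intros; exact Finset.mem_univ _
    · intro k _; simp [ZMod.natCast_val, ZMod.cast_id]
    · intro i hi; exact ZMod.val_natCast_of_lt (Finset.mem_range.1 hi)
    · intro k _; rfl
  rw [this, hζ.geom_sum_eq_zero h2]

lemma sum_eeg2_mul (hζ : IsPrimitiveRoot ζ p) (y : ZMod p) :
    ∑ k : ZMod p, eeg2 p ζ (k * y) = if y = 0 then (p : ℂ) else 0 := by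
  by_cases hy : y = 0
  · simp [hy, eeg2, ZMod.val_zero, Finset.card_univ]
  · rw [if_neg hy]
    have := Fintype.sum_equiv (Equiv.mulRight₀ y hy)
      (fun k : ZMod p => eeg2 p ζ (k * y)) (fun k : ZMod p => eeg2 p ζ k) (fun k => rfl)
    rw [this, sum_eeg2 hζ]

end Sums

/-! ### Adjacency and spectrum -/

lemma circ_adj {p : ℕ} (S : Set (ZMod p)) (h0 : (0 : ZMod p) ∉ S)
    (hsym : ∀ s ∈ S, -s ∈ S) (i j : ZMod p) :
    (circGraph p S).Adj i j ↔ i - j ∈ S := by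
  unfold circGraph
  simp only [SimpleGraph.fromRel_adj]
  constructor
  · rintro ⟨hne, h | h⟩
    · exact h
    · have := hsym _ h; rwa [neg_sub] at this
  · intro h
    refine ⟨fun he => ?_, Or.inl h⟩
    rw [he] at h; simp at h; exact h0 h

lemma spec_conj {A : Type*} [Ring A] [Algebra ℂ A] (u : Aˣ) (a : A) :
    spectrum ℂ ((u : A) * a * ↑u⁻¹) = spectrum ℂ a := by
  ext μ
  have key : algebraMap ℂ A μ - (u : A) * a * ↑u⁻¹
      = (u : A) * (algebraMap ℂ A μ - a) * ↑u⁻¹ := by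
    rw [mul_sub, sub_mul]
    congr 1
    rw [← Algebra.commutes μ (u : A), mul_assoc, Units.mul_inv, mul_one]
  simp only [spectrum.mem_iff, key]
  rw [not_iff_not, Units.isUnit_mul_units, Units.isUnit_units_mul]

section Spec
variable {p : ℕ} [hpf : Fact p.Prime] {ζ : ℂ}

lemma spectrum_adj (hζ : IsPrimitiveRoot ζ p) (S : Set (ZMod p)) (h0 : (0 : ZMod p) ∉ S)
    (hsym : ∀ s ∈ S, -s ∈ S) :
    spectrum ℂ (adjMat (circGraph p S))
      = Set.range (lamg p ζ (Finset.univ.filter (· ∈ S))) := by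
  have hζ1 : ζ ^ p = 1 := hζ.pow_eq_one
  have hp0 : (p : ℂ) ≠ 0 := by exact_mod_cast hpf.out.ne_zero
  set S' : Finset (ZMod p) := Finset.univ.filter (· ∈ S) with hS'
  set lam := lamg p ζ S' with hlam
  set M := adjMat (circGraph p S) with hM
  set F : Matrix (ZMod p) (ZMod p) ℂ := Matrix.of fun i j => eeg2 p ζ (i * j) with hF
  set Fi : Matrix (ZMod p) (ZMod p) ℂ := Matrix.of fun i j => eeg2 p ζ (-(i * j)) with hFi
  have key : ∀ x y : ZMod p, eeg2 p ζ x * eeg2 p ζ y = eeg2 p ζ (x + y) :=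
    fun x y => (eeg2_add hζ1 x y).symm
  have h1 : F * Fi = (p : ℂ) • (1 : Matrix (ZMod p) (ZMod p) ℂ) := by
    ext i j
    rw [Matrix.mul_apply]
    have : ∀ l : ZMod p, F i l * Fi l j = eeg2 p ζ (l * (i - j)) := by
      intro l
      show eeg2 p ζ (i * l) * eeg2 p ζ (-(l * j)) = _
      rw [key]; congr 1; ring
    simp_rw [this]
    rw [sum_eeg2_mul hζ (i - j)]
    simp [Matrix.one_apply, sub_eq_zero, eq_comm]
  have h2 : Fi * F = (p : ℂ) • (1 : Matrix (ZMod p) (ZMod p) ℂ) := by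
    ext i j
    rw [Matrix.mul_apply]
    have : ∀ l : ZMod p, Fi i l * F l j = eeg2 p ζ (l * (j - i)) := by
      intro l
      show eeg2 p ζ (-(i * l)) * eeg2 p ζ (l * j) = _
      rw [key]; congr 1; ring
    simp_rw [this]
    rw [sum_eeg2_mul hζ (j - i)]
    simp [Matrix.one_apply, sub_eq_zero, eq_comm]
  have hMF : M * F = F * Matrix.diagonal lam := by
    ext i j
    rw [Matrix.mul_apply, Matrix.mul_diagonal]
    have hMil : ∀ l, M i l = if i - l ∈ S then 1 else 0 := by
      intro l
      show (if (circGraph p S).Adj i l then (1 : ℂ) else 0) = _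
      rw [circ_adj S h0 hsym]
    have step1 : ∑ l, M i l * F l j = ∑ l, if i - l ∈ S then eeg2 p ζ (l * j) else 0 := by
      apply Finset.sum_congr rfl
      intro l _
      rw [hMil l]
      split <;> simp [F]
    rw [step1]
    have step2 : ∑ l : ZMod p, (if i - l ∈ S then eeg2 p ζ (l * j) else 0)
        = ∑ s : ZMod p, (if s ∈ S then eeg2 p ζ ((i - s) * j) else 0) := by
      apply Fintype.sum_equiv (Equiv.subLeft i)
      intro s
      simp [Equiv.subLeft, sub_sub_cancel]
    rw [step2]
    have step3 : ∑ s : ZMod p, (if s ∈ S then eeg2 p ζ ((i - s) * j) else 0)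
        = ∑ s ∈ S', eeg2 p ζ ((i - s) * j) := by
      rw [hS', Finset.sum_filter]
    rw [step3]
    have step4 : ∀ s : ZMod p, eeg2 p ζ ((i - s) * j)
        = eeg2 p ζ (i * j) * eeg2 p ζ (-(s * j)) := by
      intro s; rw [key]; congr 1; ring
    simp_rw [step4, ← Finset.mul_sum]
    congr 1
    have : ∑ s ∈ S', eeg2 p ζ (-(s * j)) = ∑ s ∈ S', eeg2 p ζ (j * s) := by
      refine Finset.sum_nbij' (fun s => -s) (fun s => -s) ?_ ?_ ?_ ?_ ?_
      · intro s hs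
        simp only [hS', Finset.mem_filter, Finset.mem_univ, true_and] at hs ⊢
        exact hsym _ hs
      · intro s hs
        simp only [hS', Finset.mem_filter, Finset.mem_univ, true_and] at hs ⊢
        exact hsym _ hs
      · intro s _; simp
      · intro s _; simp
      · intro s _; congr 1; ring
    rw [this]; rfl
  have hunit1 : F * ((p : ℂ)⁻¹ • Fi) = 1 := by
    rw [Matrix.mul_smul, h1, smul_smul, inv_mul_cancel₀ hp0, one_smul]
  have hunit2 : ((p : ℂ)⁻¹ • Fi) * F = 1 := by
    rw [Matrix.smul_mul, h2, smul_smul, inv_mul_cancel₀ hp0, one_smul]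
  let u : (Matrix (ZMod p) (ZMod p) ℂ)ˣ := ⟨F, (p : ℂ)⁻¹ • Fi, hunit1, hunit2⟩
  have hu : (↑u : Matrix (ZMod p) (ZMod p) ℂ) = F := rfl
  have hMeq : M = u.val * Matrix.diagonal lam * (u⁻¹).val := by
    calc M = M * u.val * (u⁻¹).val := by rw [mul_assoc, Units.mul_inv, mul_one]
    _ = u.val * Matrix.diagonal lam * (u⁻¹).val := by rw [hu, hMF]
  rw [hMeq, spec_conj u (Matrix.diagonal lam), spectrum_diagonal]

end Spec

/-! ### The Galois covariance of the eigenvalue function -/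

lemma exists_zeta_cov (p : ℕ) [hpf : Fact p.Prime] :
    ∃ ζ : ℂ, IsPrimitiveRoot ζ p ∧
      ∀ (S' : Finset (ZMod p)) (t : (ZMod p)ˣ) (k k' : ZMod p),
        lamg p ζ S' k = lamg p ζ S' k' →
          lamg p ζ S' (↑t * k) = lamg p ζ S' (↑t * k') := by
  haveI : NeZero p := ⟨hpf.out.ne_zero⟩
  set n : ℕ+ := ⟨p, hpf.out.pos⟩ with hn
  have hnp : (n : ℕ) = p := rfl
  set K := CyclotomicField (n : ℕ) ℚ with hK
  haveI : IsCyclotomicExtension {(n : ℕ)} ℚ K :=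
    haveI : NeZero ((n : ℕ) : ℚ) := ⟨by exact_mod_cast hpf.out.ne_zero⟩
    by exact CyclotomicField.isCyclotomicExtension (n := (n : ℕ)) (K := ℚ)
  set ζK : K := IsCyclotomicExtension.zeta n ℚ K with hzK
  have hζK : IsPrimitiveRoot ζK p := by
    have := IsCyclotomicExtension.zeta_spec n ℚ K
    exact this
  haveI : FiniteDimensional ℚ K := IsCyclotomicExtension.finiteDimensional {(n : ℕ)} ℚ K
  haveI : Algebra.IsAlgebraic ℚ K := Algebra.IsAlgebraic.of_finite _ _
  let φ : K →ₐ[ℚ] ℂ := IsAlgClosed.lift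
  have hφinj : Function.Injective φ := φ.toRingHom.injective
  set ζ : ℂ := φ ζK with hzeta
  have hζ : IsPrimitiveRoot ζ p := hζK.map_of_injective hφinj
  refine ⟨ζ, hζ, ?_⟩
  intro S' t k k' h
  have irr : Irreducible (cyclotomic n ℚ) := cyclotomic.irreducible_rat n.pos
  set σ : K ≃ₐ[ℚ] K := (IsCyclotomicExtension.autEquivPow K irr).symm t with hσdef
  have hσζ : σ ζK = ζK ^ ((t : ZMod p)).val := by
    have h1 := hζK.autToPow_spec ℚ σ
    have h2 : (IsCyclotomicExtension.autEquivPow K irr) σ = t :=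
      (IsCyclotomicExtension.autEquivPow K irr).apply_symm_apply t
    have h3 : hζK.autToPow ℚ σ = t := by
      rw [← h2, hσdef]
      rfl
    rw [h3] at h1
    exact h1.symm
  have hζK1 : ζK ^ p = 1 := hζK.pow_eq_one
  have hφlam : ∀ j, φ (lamg p ζK S' j) = lamg p ζ S' j := by
    intro j
    unfold lamg eeg2
    rw [map_sum]
    simp [hzeta]
  have hσlam : ∀ j, σ (lamg p ζK S' j) = lamg p ζK S' (↑t * j) := by
    intro j
    unfold lamg
    rw [map_sum]
    apply Finset.sum_congr rfl
    intro s _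
    show σ (ζK ^ (j * s).val) = eeg2 p ζK (↑t * j * s)
    rw [map_pow, hσζ, ← pow_mul, eeg2_natCast hζK1]
    congr 1
    push_cast
    rw [ZMod.natCast_val, ZMod.natCast_val, ZMod.cast_id, ZMod.cast_id]
    ring
  have hK' : lamg p ζK S' k = lamg p ζK S' k' := hφinj (by rw [hφlam, hφlam]; exact h)
  have h5 := congrArg σ hK'
  rw [hσlam, hσlam] at h5
  have h6 := congrArg φ h5
  rwa [hφlam, hφlam] at h6

/-! ### Eigenvalue facts -/

section D
variable {p : ℕ} [hpf : Fact p.Prime] {ζ : ℂ} {S' : Finset (ZMod p)}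

lemma lam_isIntegral (hζ : IsPrimitiveRoot ζ p) (k : ZMod p) :
    IsIntegral ℤ (lamg p ζ S' k) := by
  have hζ1 : ζ ^ p = 1 := hζ.pow_eq_one
  have hint : IsIntegral ℤ ζ := by
    refine IsIntegral.of_pow hpf.out.pos ?_
    rw [hζ1]; exact isIntegral_one
  exact IsIntegral.sum _ fun s _ => hint.pow _

lemma no_half (a : ℂ) (ha : IsIntegral ℤ a) (h : a + a = -1) : False := by
  have ha' : a = algebraMap ℚ ℂ (-1/2) := by
    have : a = -1/2 := by linear_combination h / 2
    rw [this]; norm_num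
  rw [ha'] at ha
  rw [isIntegral_algebraMap_iff (algebraMap ℚ ℂ).injective] at ha
  obtain ⟨y, hy⟩ := IsIntegrallyClosed.isIntegral_iff.1 ha
  have : (2 * y : ℤ) = (-1 : ℤ) := by
    have := congrArg (fun x : ℚ => 2 * x) hy
    norm_num at this
    exact_mod_cast this
  omega

lemma lam_zero_eq : lamg p ζ S' 0 = (S'.card : ℂ) := by
  unfold lamg eeg2
  simp [ZMod.val_zero]

lemma sum_lam_eq_zero (hζ : IsPrimitiveRoot ζ p) (h0' : (0 : ZMod p) ∉ S') :
    ∑ k : ZMod p, lamg p ζ S' k = 0 := by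
  unfold lamg
  rw [Finset.sum_comm]
  have : ∀ s ∈ S', ∑ k : ZMod p, eeg2 p ζ (k * s) = 0 := by
    intro s hs
    rw [sum_eeg2_mul hζ s, if_neg]
    intro h; exact h0' (h ▸ hs)
  rw [Finset.sum_congr rfl this, Finset.sum_const, smul_zero]

lemma lam_re_lt (hζ : IsPrimitiveRoot ζ p) (k : ZMod p) (hk : k ≠ 0)
    (h0' : (0 : ZMod p) ∉ S') (hne : S'.Nonempty) : (lamg p ζ S' k).re < S'.card := by
  have hζ1 : ζ ^ p = 1 := hζ.pow_eq_one
  have habs : ∀ x : ZMod p, ‖eeg2 p ζ x‖ = 1 := by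
    intro x
    have h1 : ‖ζ‖ = 1 := Complex.norm_eq_one_of_pow_eq_one hζ1 hpf.out.ne_zero
    unfold eeg2
    rw [norm_pow, h1, one_pow]
  have hre_le : ∀ x : ZMod p, (eeg2 p ζ x).re ≤ 1 := by
    intro x
    calc (eeg2 p ζ x).re ≤ ‖eeg2 p ζ x‖ := Complex.re_le_norm _
    _ = 1 := habs x
  obtain ⟨s₀, hs₀⟩ := hne
  have hs₀0 : s₀ ≠ 0 := fun h => h0' (h ▸ hs₀)
  have hne1 : eeg2 p ζ (k * s₀) ≠ 1 := by
    intro h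
    have hdvd : p ∣ (k * s₀).val := hζ.pow_eq_one_iff_dvd _ |>.1 h
    have hv : (k * s₀).val = 0 := Nat.eq_zero_of_dvd_of_lt hdvd (ZMod.val_lt _)
    have hzero : k * s₀ = 0 := (ZMod.val_eq_zero _).1 hv
    rcases mul_eq_zero.1 hzero with h | h
    · exact hk h
    · exact hs₀0 h
  have hre_lt : (eeg2 p ζ (k * s₀)).re < 1 := by
    rcases lt_or_eq_of_le (hre_le (k * s₀)) with h | h
    · exact h
    · exfalso
      apply hne1
      have habs' := habs (k * s₀)
      have hsq : ‖eeg2 p ζ (k * s₀)‖ ^ 2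
          = (eeg2 p ζ (k * s₀)).re ^ 2 + (eeg2 p ζ (k * s₀)).im ^ 2 := by
        rw [Complex.sq_norm, Complex.normSq_apply]; ring
      rw [habs', h] at hsq
      have him : (eeg2 p ζ (k * s₀)).im = 0 := by nlinarith
      apply Complex.ext
      · rw [h]; rfl
      · rw [him]; rfl
  have hres : (lamg p ζ S' k).re = ∑ s ∈ S', (eeg2 p ζ (k * s)).re := by
    unfold lamg
    exact Complex.re_sum _ _
  rw [hres]
  calc ∑ s ∈ S', (eeg2 p ζ (k * s)).re < ∑ s ∈ S', 1 := by
        apply Finset.sum_lt_sum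
        · intro i _; exact hre_le _
        · exact ⟨s₀, hs₀, hre_lt⟩
  _ = S'.card := by simp

lemma lam_inversion (hζ : IsPrimitiveRoot ζ p) (x : ZMod p) :
    ∑ k : ZMod p, lamg p ζ S' k * eeg2 p ζ (-(k * x)) = if x ∈ S' then (p : ℂ) else 0 := by
  have hζ1 : ζ ^ p = 1 := hζ.pow_eq_one
  unfold lamg
  have step1 : ∀ k : ZMod p, (∑ s ∈ S', eeg2 p ζ (k * s)) * eeg2 p ζ (-(k * x))
      = ∑ s ∈ S', eeg2 p ζ (k * (s - x)) := by
    intro k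
    rw [Finset.sum_mul]
    apply Finset.sum_congr rfl
    intro s _
    rw [← eeg2_add hζ1]
    congr 1
    ring
  simp_rw [step1]
  rw [Finset.sum_comm]
  have step2 : ∀ s ∈ S', ∑ k : ZMod p, eeg2 p ζ (k * (s - x))
      = if s = x then (p : ℂ) else 0 := by
    intro s _
    rw [sum_eeg2_mul hζ (s - x)]
    simp [sub_eq_zero]
  rw [Finset.sum_congr rfl step2]
  exact Finset.sum_ite_eq' S' x (fun _ => (p : ℂ))

lemma lam_complete (hζ : IsPrimitiveRoot ζ p) (k : ZMod p) (hk : k ≠ 0) :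
    lamg p ζ (Finset.univ.filter (· ≠ (0 : ZMod p))) k = -1 := by
  unfold lamg
  rw [Finset.filter_ne', Finset.sum_erase_eq_sub (Finset.mem_univ 0)]
  have h1 : ∑ s : ZMod p, eeg2 p ζ (k * s) = ∑ s : ZMod p, eeg2 p ζ (s * k) := by
    simp_rw [mul_comm]
  rw [h1, sum_eeg2_mul hζ k, if_neg hk]
  simp [eeg2, ZMod.val_zero]

lemma lam_mult (t : ZMod p) (ht : t ≠ 0) (hmem : ∀ s ∈ S', t * s ∈ S')
    (hmem' : ∀ s ∈ S', t⁻¹ * s ∈ S') (k : ZMod p) :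
    lamg p ζ S' (t * k) = lamg p ζ S' k := by
  unfold lamg
  refine Finset.sum_nbij' (fun s => t * s) (fun s => t⁻¹ * s) hmem hmem' ?_ ?_ ?_
  · intro s _; field_simp
  · intro s _; field_simp
  · intro s _; congr 1; ring

lemma nonsq_div {x y : ZMod p} (hx0 : x ≠ 0) (hy0 : y ≠ 0)
    (hx : ¬IsSquare x) (hy : ¬IsSquare y) : IsSquare (x * y⁻¹) := by
  have hxy0 : x * y⁻¹ ≠ 0 := mul_ne_zero hx0 (inv_ne_zero hy0)
  rw [← quadraticChar_one_iff_isSquare hxy0]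
  have hchx : quadraticChar (ZMod p) x = -1 := quadraticChar_neg_one_iff_not_isSquare.2 hx
  have hchy : quadraticChar (ZMod p) y = -1 := quadraticChar_neg_one_iff_not_isSquare.2 hy
  have hinv : quadraticChar (ZMod p) y⁻¹ * quadraticChar (ZMod p) y = 1 := by
    rw [← map_mul, inv_mul_cancel₀ hy0]
    exact map_one _
  have hq : quadraticChar (ZMod p) y⁻¹ = -1 := by rw [hchy] at hinv; omega
  rw [map_mul, hchx, hq]
  ring

lemma sq_inv {x : ZMod p} (hx : IsSquare x) : IsSquare x⁻¹ := by
  obtain ⟨c, rfl⟩ := hx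
  exact ⟨c⁻¹, by rw [mul_inv_rev]⟩

lemma card_sq_eq_nonsq {u : ZMod p} (hu0 : u ≠ 0) (hu : ¬IsSquare u) :
    (Finset.univ.filter fun x : ZMod p => x ≠ 0 ∧ IsSquare x).card
      = (Finset.univ.filter fun x : ZMod p => x ≠ 0 ∧ ¬IsSquare x).card := by
  refine Finset.card_nbij' (fun x => u * x) (fun x => u⁻¹ * x) ?_ ?_ ?_ ?_
  · intro x hx
    simp only [Finset.mem_coe, Finset.mem_filter, Finset.mem_univ, true_and] at hx ⊢
    obtain ⟨hx0, hxsq⟩ := hx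
    refine ⟨mul_ne_zero hu0 hx0, fun hsq => hu ?_⟩
    have hue : u = (u * x) * x⁻¹ := by field_simp
    rw [hue]
    exact hsq.mul (sq_inv hxsq)
  · intro x hx
    simp only [Finset.mem_coe, Finset.mem_filter, Finset.mem_univ, true_and] at hx ⊢
    obtain ⟨hx0, hxsq⟩ := hx
    refine ⟨mul_ne_zero (inv_ne_zero hu0) hx0, ?_⟩
    rw [mul_comm]
    exact nonsq_div hx0 hu0 hxsq hu
  · intro x _; field_simp
  · intro x _; field_simp

end D

/-! ### Main theorem -/

/-- for a prime `p`, a connected circulant graph `G(p;S)` with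
`S ⊆ {1,…,p-1}`, `S = -S`, is strongly regular (i.e. has exactly three distinct
adjacency eigenvalues) iff `p ≡ 1 (mod 4)` and `S` is the set of nonzero quadratic
residues or the set of quadratic non-residues modulo `p`. -/
theorem stmt_2 (p : ℕ) [NeZero p] (hp : p.Prime) (S : Set (ZMod p))
    (h0 : (0 : ZMod p) ∉ S) (hsym : ∀ s ∈ S, -s ∈ S)
    (hconn : (circGraph p S).Connected) :
    (spectrum ℂ (adjMat (circGraph p S))).ncard = 3 ↔
      p % 4 = 1 ∧
        (S = {x : ZMod p | x ≠ 0 ∧ IsSquare x} ∨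
          S = {x : ZMod p | x ≠ 0 ∧ ¬ IsSquare x}) := by
  haveI hpf : Fact p.Prime := ⟨hp⟩
  obtain ⟨ζ, hζ, hcov⟩ := exists_zeta_cov p
  set S' : Finset (ZMod p) := Finset.univ.filter (· ∈ S) with hS'def
  have hspec : spectrum ℂ (adjMat (circGraph p S)) = Set.range (lamg p ζ S') :=
    spectrum_adj hζ S h0 hsym
  set lam := lamg p ζ S' with hlamdef
  have hmemS' : ∀ x : ZMod p, x ∈ S' ↔ x ∈ S := by
    intro x; simp [hS'def]
  have h0' : (0 : ZMod p) ∉ S' := fun h => h0 ((hmemS' 0).1 h)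
  have hone : (1 : ZMod p) ≠ 0 := one_ne_zero
  set V : Set ℂ := lam '' {k : ZMod p | k ≠ 0} with hVdef
  have hVfin : V.Finite := Set.toFinite _
  have hrange : Set.range lam = insert (lam 0) V := by
    ext z
    constructor
    · rintro ⟨k, rfl⟩
      by_cases hk : k = 0
      · rw [hk]; exact Set.mem_insert _ _
      · exact Set.mem_insert_of_mem _ ⟨k, hk, rfl⟩
    · rintro (rfl | ⟨k, _, rfl⟩) <;> exact ⟨_, rfl⟩
  have hd : lam 0 = (S'.card : ℂ) := lam_zero_eq
  have hdnotV : S'.Nonempty → lam 0 ∉ V := by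
    rintro hSne ⟨k, hk, hlamk⟩
    have hlt := lam_re_lt hζ k hk h0' hSne
    have heq : lam k = (S'.card : ℂ) := by rw [hlamk, hd]
    rw [show lamg p ζ S' k = lam k from rfl, heq] at hlt
    simp at hlt
  -- covariance with nonzero scalars
  have hcov' : ∀ (t k k' : ZMod p), t ≠ 0 → lam k = lam k' → lam (t * k) = lam (t * k') := by
    intro t k k' ht h
    obtain ⟨w, rfl⟩ := (isUnit_iff_ne_zero.2 ht)
    exact hcov S' w k k' h
  constructor
  · -- forward direction
    intro h3
    rw [hspec] at h3
    have hSne : S'.Nonempty := by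
      by_contra hne
      rw [Finset.not_nonempty_iff_eq_empty] at hne
      have hlam0 : lam = fun _ => 0 := by
        funext k; rw [hlamdef]; unfold lamg; rw [hne]; simp
      rw [hlam0, Set.range_const, Set.ncard_singleton] at h3
      omega
    have hVcard : V.ncard = 2 := by
      have h4 : (Set.range lam).ncard = V.ncard + 1 := by
        rw [hrange, Set.ncard_insert_of_notMem (hdnotV hSne) hVfin]
      omega
    obtain ⟨a, b, hab, hVab⟩ := Set.ncard_eq_two.1 hVcard
    have hl1 : lam 1 ∈ V := ⟨1, hone, rfl⟩
    obtain ⟨bb, hbbne, hbbV, hVsub⟩ :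
        ∃ bb, bb ≠ lam 1 ∧ bb ∈ V ∧ ∀ z ∈ V, z = lam 1 ∨ z = bb := by
      rw [hVab] at hl1 ⊢
      rcases hl1 with h | h
      · exact ⟨b, by rw [← h] at hab; exact fun hb => hab hb.symm,
          Set.mem_insert_of_mem _ rfl, by
            rintro z (rfl | rfl)
            · left; rw [h]
            · right; rfl⟩
      · rw [Set.mem_singleton_iff] at h
        exact ⟨a, by rw [← h] at hab; exact fun ha => hab ha,
          Set.mem_insert _ _, by
            rintro z (rfl | rfl)
            · right; rfl
            · left; rw [h]⟩
    set Hs : Set (ZMod p) := {x | x ≠ 0 ∧ lam x = lam 1} with hHsdef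
    have h1H : (1 : ZMod p) ∈ Hs := ⟨hone, rfl⟩
    have hmulH : ∀ x ∈ Hs, ∀ y ∈ Hs, x * y ∈ Hs := by
      rintro x ⟨hx0, hx⟩ y ⟨hy0, hy⟩
      refine ⟨mul_ne_zero hx0 hy0, ?_⟩
      have := hcov' x y 1 hx0 hy
      rwa [mul_one, hx] at this
    have hinvH : ∀ x ∈ Hs, x⁻¹ ∈ Hs := by
      rintro x ⟨hx0, hx⟩
      refine ⟨inv_ne_zero hx0, ?_⟩
      have := hcov' x⁻¹ x 1 (inv_ne_zero hx0) hx
      rw [mul_one, inv_mul_cancel₀ hx0] at this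
      exact this.symm
    have hval : ∀ k : ZMod p, k ≠ 0 → k ∉ Hs → lam k = bb := by
      intro k hk0 hkH
      have hkV : lam k ∈ V := ⟨k, hk0, rfl⟩
      rcases hVsub _ hkV with h | h
      · exact absurd ⟨hk0, h⟩ hkH
      · exact h
    have hratio : ∀ x y : ZMod p, x ≠ 0 → y ≠ 0 → x ∉ Hs → y ∉ Hs → x * y⁻¹ ∈ Hs := by
      intro x y hx0 hy0 hx hy
      have hxy : lam x = lam y := by rw [hval x hx0 hx, hval y hy0 hy]
      have h5 := hcov' y⁻¹ x y (inv_ne_zero hy0) hxy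
      rw [inv_mul_cancel₀ hy0] at h5
      exact ⟨mul_ne_zero hx0 (inv_ne_zero hy0), by rw [mul_comm]; exact h5⟩
    obtain ⟨u, hu0, huH⟩ : ∃ u : ZMod p, u ≠ 0 ∧ u ∉ Hs := by
      obtain ⟨k, hk0, hk⟩ := hbbV
      exact ⟨k, hk0, fun hmem => hbbne (by rw [← hk]; exact hmem.2)⟩
    have hsqH : ∀ x : ZMod p, x ≠ 0 → IsSquare x → x ∈ Hs := by
      intro x hx0 hsq
      obtain ⟨c, rfl⟩ := hsq
      have hc0 : c ≠ 0 := by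
        intro h; rw [h] at hx0; simp at hx0
      by_cases hc : c ∈ Hs
      · exact hmulH c hc c hc
      · have hcinv : c⁻¹ ∉ Hs := fun h => hc (by
          have := hinvH _ h; rwa [inv_inv] at this)
        have := hratio c c⁻¹ hc0 (inv_ne_zero hc0) hc hcinv
        rwa [inv_inv] at this
    have hunsq : ¬IsSquare u := fun h => huH (hsqH u hu0 h)
    have hp2 : p ≠ 2 := by
      intro h
      subst h
      apply hunsq
      have : ∀ x : ZMod 2, x = x * x := by intro x; fin_cases x <;> rfl
      exact ⟨u, this u⟩
    have hHsq : ∀ x ∈ Hs, IsSquare x := by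
      intro x hx
      by_contra hxsq
      apply huH
      have h1 : IsSquare (u * x⁻¹) := nonsq_div hu0 hx.1 hunsq hxsq
      have h2 : u * x⁻¹ ∈ Hs := hsqH _ (mul_ne_zero hu0 (inv_ne_zero hx.1)) h1
      have := hmulH _ h2 _ hx
      rwa [mul_assoc, inv_mul_cancel₀ hx.1, mul_one] at this
    have hHeq : ∀ x : ZMod p, x ∈ Hs ↔ (x ≠ 0 ∧ IsSquare x) :=
      fun x => ⟨fun h => ⟨h.1, hHsq x h⟩, fun h => hsqH x h.1 h.2⟩
    have hlamH : ∀ h ∈ Hs, ∀ k, lam (h * k) = lam k := by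
      rintro h hh k
      by_cases hk0 : k = 0
      · rw [hk0, mul_zero]
      by_cases hkH : k ∈ Hs
      · rw [(hmulH h hh k hkH).2, hkH.2]
      · have hhk : h * k ∉ Hs := by
          intro hmem
          apply hkH
          have := hmulH _ (hinvH h hh) _ hmem
          rwa [← mul_assoc, inv_mul_cancel₀ hh.1, one_mul] at this
        rw [hval _ (mul_ne_zero hh.1 hk0) hhk, hval k hk0 hkH]
    have hp0 : (p : ℂ) ≠ 0 := by exact_mod_cast hp.ne_zero
    have hSinv : ∀ h ∈ Hs, ∀ x : ZMod p, (h * x ∈ S' ↔ x ∈ S') := by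
      intro h hh x
      have hh0 := hh.1
      have e1 := lam_inversion (S' := S') hζ (h * x)
      have e2 := lam_inversion (S' := S') hζ x
      have e3 : ∑ k : ZMod p, lamg p ζ S' (h * k) * eeg2 p ζ (-((h * k) * x))
          = ∑ k : ZMod p, lamg p ζ S' k * eeg2 p ζ (-(k * x)) :=
        Fintype.sum_equiv (Equiv.mulLeft₀ h hh0)
          (fun k => lamg p ζ S' (h * k) * eeg2 p ζ (-((h * k) * x)))
          (fun k => lamg p ζ S' k * eeg2 p ζ (-(k * x)))
          (fun k => rfl)
      have e4 : ∀ k : ZMod p, lamg p ζ S' (h * k) * eeg2 p ζ (-((h * k) * x))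
          = lamg p ζ S' k * eeg2 p ζ (-(k * (h * x))) := by
        intro k
        rw [show lamg p ζ S' (h * k) = lam (h * k) from rfl, hlamH h hh k]
        show lam k * _ = lam k * _
        congr 2
        ring
      rw [Finset.sum_congr rfl (fun k _ => e4 k)] at e3
      rw [e1] at e3
      rw [e2] at e3
      constructor
      · intro hx1
        by_contra hx2
        rw [if_pos hx1, if_neg hx2] at e3
        exact hp0 e3
      · intro hx2
        by_contra hx1
        rw [if_neg hx1, if_pos hx2] at e3
        exact hp0 e3.symm
    obtain ⟨s₀, hs₀⟩ := hSne
    have hs₀0 : s₀ ≠ 0 := fun h => h0' (h ▸ hs₀)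
    have hHsubS : ∀ s ∈ S', s ∈ Hs → ∀ y ∈ Hs, y ∈ S' := by
      intro s hsS hsH y hy
      have h1 : y * s⁻¹ ∈ Hs := hmulH y hy _ (hinvH s hsH)
      have := (hSinv _ h1 s).2 hsS
      rwa [mul_assoc, inv_mul_cancel₀ hsH.1, mul_one] at this
    have hNsubS : ∀ s ∈ S', s ∉ Hs → ∀ y : ZMod p, y ≠ 0 → y ∉ Hs → y ∈ S' := by
      intro s hsS hsH y hy0 hyH
      have hs0 : s ≠ 0 := fun h => h0' (h ▸ hsS)
      have h1 : y * s⁻¹ ∈ Hs := hratio y s hy0 hs0 hyH hsH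
      have := (hSinv _ h1 s).2 hsS
      rwa [mul_assoc, inv_mul_cancel₀ hs0, mul_one] at this
    have hnotall : ¬(S' = Finset.univ.filter (· ≠ (0 : ZMod p))) := by
      intro hall
      apply huH
      refine ⟨hu0, ?_⟩
      rw [hlamdef, hall, lam_complete hζ u hu0, lam_complete hζ 1 hone]
    by_cases hcase : s₀ ∈ Hs
    · have hSS : ∀ x : ZMod p, x ∈ S' ↔ x ∈ Hs := by
        intro x
        constructor
        · intro hx
          by_contra hxH
          have hx0 : x ≠ 0 := fun h => h0' (h ▸ hx)
          apply hnotall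
          ext z
          simp only [Finset.mem_filter, Finset.mem_univ, true_and]
          constructor
          · intro hz; exact fun h => h0' (h ▸ hz)
          · intro hz0
            by_cases hzH : z ∈ Hs
            · exact hHsubS s₀ hs₀ hcase z hzH
            · exact hNsubS x hx hxH z hz0 hzH
        · intro hx; exact hHsubS s₀ hs₀ hcase x hx
      have hSeq : S = {x : ZMod p | x ≠ 0 ∧ IsSquare x} := by
        ext x
        rw [← hmemS' x, hSS x]
        exact hHeq x
      have hm1 : IsSquare (-1 : ZMod p) := by
        have h1S : (1 : ZMod p) ∈ S := (hmemS' 1).1 ((hSS 1).2 h1H)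
        have hm : (-1 : ZMod p) ∈ S := hsym 1 h1S
        rw [hSeq] at hm
        exact hm.2
      have hp4 : p % 4 = 1 := by
        have hne3 := (ZMod.exists_sq_eq_neg_one_iff (p := p)).1 hm1
        have hodd : p % 2 = 1 := Nat.odd_iff.1 (hp.odd_of_ne_two hp2)
        omega
      exact ⟨hp4, Or.inl hSeq⟩
    · have hSS : ∀ x : ZMod p, x ∈ S' ↔ (x ≠ 0 ∧ x ∉ Hs) := by
        intro x
        constructor
        · intro hx
          have hx0 : x ≠ 0 := fun h => h0' (h ▸ hx)
          refine ⟨hx0, fun hxH => ?_⟩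
          apply hnotall
          ext z
          simp only [Finset.mem_filter, Finset.mem_univ, true_and]
          constructor
          · intro hz; exact fun h => h0' (h ▸ hz)
          · intro hz0
            by_cases hzH : z ∈ Hs
            · exact hHsubS x hx hxH z hzH
            · exact hNsubS s₀ hs₀ hcase z hz0 hzH
        · rintro ⟨hx0, hxH⟩
          exact hNsubS s₀ hs₀ hcase x hx0 hxH
      have hSeq : S = {x : ZMod p | x ≠ 0 ∧ ¬IsSquare x} := by
        ext x
        rw [← hmemS' x, hSS x]
        constructor
        · rintro ⟨hx0, hxH⟩
          exact ⟨hx0, fun hsq => hxH (hsqH x hx0 hsq)⟩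
        · rintro ⟨hx0, hxsq⟩
          exact ⟨hx0, fun hxH => hxsq (hHsq x hxH)⟩
      have hm1 : IsSquare (-1 : ZMod p) := by
        have hs₀S : s₀ ∈ S := (hmemS' s₀).1 hs₀
        have hms : -s₀ ∈ S := hsym s₀ hs₀S
        rw [hSeq] at hms hs₀S
        have h5 : IsSquare ((-s₀) * s₀⁻¹) := nonsq_div hms.1 hs₀0 hms.2 hs₀S.2
        rwa [neg_mul, mul_inv_cancel₀ hs₀0] at h5
      have hp4 : p % 4 = 1 := by
        have hne3 := (ZMod.exists_sq_eq_neg_one_iff (p := p)).1 hm1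
        have hodd : p % 2 = 1 := Nat.odd_iff.1 (hp.odd_of_ne_two hp2)
        omega
      exact ⟨hp4, Or.inr hSeq⟩
  · -- backward direction
    rintro ⟨hp4, hS⟩
    have hp2 : p ≠ 2 := by omega
    obtain ⟨u, hunsq⟩ : ∃ u : ZMod p, ¬IsSquare u := by
      apply FiniteField.exists_nonsquare
      rw [ZMod.ringChar_zmod_n]
      exact hp2
    have hu0 : u ≠ 0 := by
      intro h; rw [h] at hunsq; exact hunsq (by exact ⟨0, by ring⟩)
    set SQ' : Finset (ZMod p) := Finset.univ.filter (fun x => x ≠ 0 ∧ IsSquare x) with hSQ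
    set NSQ' : Finset (ZMod p) := Finset.univ.filter (fun x => x ≠ 0 ∧ ¬IsSquare x) with hNSQ
    have hS'eq : S' = SQ' ∨ S' = NSQ' := by
      rcases hS with h | h
      · left; ext x; simp [hS'def, hSQ, h, Set.mem_setOf_eq]
      · right; ext x; simp [hS'def, hNSQ, h, Set.mem_setOf_eq]
    have h1sq : (1 : ZMod p) ∈ SQ' := by
      simp [hSQ, hone, IsSquare.one]
    have hSne : S'.Nonempty := by
      rcases hS'eq with h | h
      · exact ⟨1, h ▸ h1sq⟩
      · refine ⟨u, h ▸ ?_⟩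
        simp [hNSQ, hu0, hunsq]
    -- multiplier invariance
    have hmemmul : ∀ t : ZMod p, t ≠ 0 → IsSquare t → ∀ s ∈ S', t * s ∈ S' := by
      intro t ht0 htsq s hs
      rcases hS'eq with h | h <;> rw [h] at hs ⊢ <;>
        simp only [hSQ, hNSQ, Finset.mem_filter, Finset.mem_univ, true_and] at hs ⊢
      · exact ⟨mul_ne_zero ht0 hs.1, htsq.mul hs.2⟩
      · refine ⟨mul_ne_zero ht0 hs.1, fun hsq => hs.2 ?_⟩
        have : s = t⁻¹ * (t * s) := by field_simp
        rw [this]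
        exact (sq_inv htsq).mul hsq
    have hlmul : ∀ t : ZMod p, t ≠ 0 → IsSquare t → ∀ k, lam (t * k) = lam k := by
      intro t ht0 htsq k
      exact lam_mult t ht0 (hmemmul t ht0 htsq)
        (hmemmul t⁻¹ (inv_ne_zero ht0) (sq_inv htsq)) k
    have hlam_sq : ∀ k : ZMod p, k ≠ 0 → IsSquare k → lam k = lam 1 := by
      intro k hk0 hksq
      have := hlmul k hk0 hksq 1
      rwa [mul_one] at this
    have hlam_nsq : ∀ k : ZMod p, k ≠ 0 → ¬IsSquare k → lam k = lam u := by
      intro k hk0 hknsq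
      have h1 : IsSquare (k * u⁻¹) := nonsq_div hk0 hu0 hknsq hunsq
      have h2 : k * u⁻¹ ≠ 0 := mul_ne_zero hk0 (inv_ne_zero hu0)
      have := hlmul (k * u⁻¹) h2 h1 u
      rwa [mul_assoc, inv_mul_cancel₀ hu0, mul_one] at this
    -- the sum relation
    have hcard_eq : SQ'.card = NSQ'.card := card_sq_eq_nonsq hu0 hunsq
    have hcardS : S'.card = SQ'.card := by
      rcases hS'eq with h | h
      · rw [h]
      · rw [h, hcard_eq]
    have hsum0 : ∑ k : ZMod p, lam k = 0 := sum_lam_eq_zero hζ h0'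
    have hsplit : ∑ k : ZMod p, lam k
        = lam 0 + ((SQ'.card : ℂ) * lam 1 + (NSQ'.card : ℂ) * lam u) := by
      rw [← Finset.add_sum_erase _ _ (Finset.mem_univ (0 : ZMod p))]
      congr 1
      have hsplit2 : Finset.univ.erase (0 : ZMod p)
          = SQ' ∪ NSQ' := by
        ext x
        simp only [Finset.mem_erase, Finset.mem_univ, and_true, Finset.mem_union, hSQ, hNSQ,
          Finset.mem_filter, true_and]
        by_cases hx : x = 0 <;> by_cases hsq : IsSquare x <;> simp [hx, hsq]
      have hdisj : Disjoint SQ' NSQ' := by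
        rw [Finset.disjoint_left]
        intro x hx1 hx2
        simp only [hSQ, hNSQ, Finset.mem_filter, Finset.mem_univ, true_and] at hx1 hx2
        exact hx2.2 hx1.2
      rw [hsplit2, Finset.sum_union hdisj]
      congr 1
      · rw [Finset.sum_congr rfl (fun x hx => by
          simp only [hSQ, Finset.mem_filter, Finset.mem_univ, true_and] at hx
          exact hlam_sq x hx.1 hx.2), Finset.sum_const, nsmul_eq_mul]
      · rw [Finset.sum_congr rfl (fun x hx => by
          simp only [hNSQ, Finset.mem_filter, Finset.mem_univ, true_and] at hx
          exact hlam_nsq x hx.1 hx.2), Finset.sum_const, nsmul_eq_mul]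
    have hm0 : SQ'.card ≠ 0 := Finset.card_ne_zero_of_mem h1sq
    have hm0' : ((SQ'.card : ℂ)) ≠ 0 := by exact_mod_cast hm0
    have hab : lam 1 + lam u = -1 := by
      rw [hsum0] at hsplit
      rw [hd, hcardS, ← hcard_eq] at hsplit
      have : (SQ'.card : ℂ) * (1 + lam 1 + lam u) = 0 := by
        linear_combination -hsplit
      have h6 := mul_eq_zero.1 this
      rcases h6 with h6 | h6
      · exact absurd h6 hm0'
      · linear_combination h6
    have hlne : lam 1 ≠ lam u := by
      intro h
      apply no_half (lam 1) (lam_isIntegral hζ 1)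
      rw [← hab]
      rw [← h]
    have hVeq : V = {lam 1, lam u} := by
      ext z
      constructor
      · rintro ⟨k, hk0, rfl⟩
        by_cases hksq : IsSquare k
        · left; exact hlam_sq k hk0 hksq
        · right; exact hlam_nsq k hk0 hksq
      · rintro (rfl | rfl)
        · exact ⟨1, hone, rfl⟩
        · exact ⟨u, hu0, rfl⟩
    rw [hspec, hrange, hVeq]
    rw [Set.ncard_insert_of_notMem (by rw [← hVeq]; exact hdnotV hSne)
      (Set.toFinite _), Set.ncard_pair hlne]
end

section
/- The unitary Cayley graph X_n is strongly regular if and only if n is a composite prime power, i.e., n = p^α for some prime p and α ≥ 2. -/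
open scoped Classical

/-- The unitary Cayley graph `X_n` on `ℤ_n`: `i ~ j` iff `i - j` is a unit
(equivalently `gcd(i-j, n) = 1`). -/
def ucg (n : ℕ) : SimpleGraph (ZMod n) where
  Adj i j := i ≠ j ∧ IsUnit (i - j)
  symm := by
    refine ⟨?_⟩
    intro i j h
    exact ⟨h.1.symm, by simpa [neg_sub] using h.2.neg⟩
  loopless := ⟨fun i h => h.1 rfl⟩

namespace Stmt6

open Finset

/-- A fixed primitive `n`-th root of unity. -/
noncomputable def zet (n : ℕ) : ℂ := Complex.exp (2 * Real.pi * Complex.I / n)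

lemma zet_prim (n : ℕ) [NeZero n] : IsPrimitiveRoot (zet n) n :=
  Complex.isPrimitiveRoot_exp n (NeZero.ne n)

/-- The standard additive character of `ZMod n`. -/
noncomputable def chi (n : ℕ) [NeZero n] : AddChar (ZMod n) ℂ :=
  AddChar.zmodChar n (zet_prim n).pow_eq_one

lemma chi_natCast (n : ℕ) [NeZero n] (a : ℕ) : chi n (a : ZMod n) = zet n ^ a :=
  AddChar.zmodChar_apply' _ a

/-- The Ramanujan-sum eigenvalues. -/
noncomputable def cEig (n : ℕ) [NeZero n] (a : ZMod n) : ℂ :=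
  ∑ u : (ZMod n)ˣ, chi n (a * (u : ZMod n))

/-- The character (DFT) matrix. -/
noncomputable def Wm (n : ℕ) [NeZero n] : Matrix (ZMod n) (ZMod n) ℂ :=
  Matrix.of fun x a => chi n (x * a)

/-- The conjugate character matrix. -/
noncomputable def Wm' (n : ℕ) [NeZero n] : Matrix (ZMod n) (ZMod n) ℂ :=
  Matrix.of fun a y => chi n (-(a * y))

lemma sum_chi (n : ℕ) [NeZero n] (b : ZMod n) :
    ∑ x : ZMod n, chi n (b * x) = if b = 0 then (n : ℂ) else 0 := by
  have h : ∀ x : ZMod n, chi n (b * x) = ((chi n).mulShift b) x := fun x =>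
    (AddChar.mulShift_apply).symm
  simp_rw [h]
  rw [AddChar.sum_eq_ite]
  rcases eq_or_ne b 0 with rfl | hb
  · rw [if_pos rfl, if_pos, ZMod.card]
    rw [AddChar.mulShift_zero, AddChar.one_eq_zero]
  · rw [if_neg hb, if_neg]
    intro h0
    exact AddChar.zmodChar_primitive_of_primitive_root n (zet_prim n) hb
      (h0.trans AddChar.one_eq_zero.symm)

lemma Wm_mul_Wm' (n : ℕ) [NeZero n] : Wm n * Wm' n = (n : ℂ) • 1 := by
  ext x y
  rw [Matrix.mul_apply]
  have h : ∀ a : ZMod n, Wm n x a * Wm' n a y = chi n ((x - y) * a) := by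
    intro a
    rw [Wm, Wm', Matrix.of_apply, Matrix.of_apply, ← AddChar.map_add_eq_mul]
    ring_nf
  simp_rw [h]
  rw [sum_chi n (x - y)]
  rcases eq_or_ne x y with rfl | hxy
  · simp [Matrix.one_apply]
  · simp [Matrix.smul_apply, Matrix.one_apply, sub_eq_zero, hxy]

lemma Wm'_mul_Wm (n : ℕ) [NeZero n] : Wm' n * Wm n = (n : ℂ) • 1 := by
  ext a b
  rw [Matrix.mul_apply]
  have h : ∀ x : ZMod n, Wm' n a x * Wm n x b = chi n ((b - a) * x) := by
    intro x
    rw [Wm, Wm', Matrix.of_apply, Matrix.of_apply, ← AddChar.map_add_eq_mul]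
    ring_nf
  simp_rw [h]
  rw [sum_chi n (b - a)]
  rcases eq_or_ne a b with rfl | hab
  · simp [Matrix.one_apply]
  · simp [Matrix.smul_apply, Matrix.one_apply, sub_eq_zero, hab, Ne.symm hab]

lemma isUnit_Wm (n : ℕ) [NeZero n] : IsUnit (Wm n) := by
  have hn : (n : ℂ) ≠ 0 := Nat.cast_ne_zero.mpr (NeZero.ne n)
  refine ⟨⟨Wm n, (n : ℂ)⁻¹ • Wm' n, ?_, ?_⟩, rfl⟩
  · rw [Matrix.mul_smul, Wm_mul_Wm', smul_smul, inv_mul_cancel₀ hn, one_smul]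
  · rw [Matrix.smul_mul, Wm'_mul_Wm, smul_smul, inv_mul_cancel₀ hn, one_smul]

lemma sum_units (n : ℕ) [NeZero n] (f : ZMod n → ℂ) :
    ∑ z : ZMod n, (if IsUnit z then f z else 0) = ∑ u : (ZMod n)ˣ, f (u : ZMod n) := by
  rw [← Finset.sum_filter]
  have himg : Finset.univ.filter (fun z : ZMod n => IsUnit z)
      = Finset.univ.image (fun u : (ZMod n)ˣ => (u : ZMod n)) := by
    ext z
    simp only [Finset.mem_filter, Finset.mem_univ, true_and, Finset.mem_image]
    exact Iff.rfl
  rw [himg, Finset.sum_image (fun a _ b _ h => Units.ext h)]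

lemma adj_mul_Wm (n : ℕ) [NeZero n] (hn : 1 < n) :
    adjMat (ucg n) * Wm n = Wm n * Matrix.diagonal (cEig n) := by
  haveI : Fact (1 < n) := ⟨hn⟩
  ext x b
  rw [Matrix.mul_apply, Matrix.mul_diagonal]
  have hadj : ∀ y : ZMod n, (ucg n).Adj x y ↔ IsUnit (y - x) := by
    intro y
    constructor
    · rintro ⟨-, h2⟩
      simpa [neg_sub] using h2.neg
    · intro h
      refine ⟨fun hxy => ?_, by simpa [neg_sub] using h.neg⟩
      rw [hxy, sub_self] at h
      exact not_isUnit_zero h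
  have h1 : ∀ y : ZMod n, adjMat (ucg n) x y * Wm n y b
      = if IsUnit (y - x) then chi n (y * b) else 0 := by
    intro y
    rw [adjMat, Wm, Matrix.of_apply, Matrix.of_apply]
    by_cases h : (ucg n).Adj x y
    · rw [if_pos h, if_pos ((hadj y).mp h), one_mul]
    · rw [if_neg h, if_neg (fun hu => h ((hadj y).mpr hu)), zero_mul]
  simp_rw [h1]
  have h2 : ∑ z : ZMod n, (if IsUnit z then chi n ((x + z) * b) else 0)
      = ∑ y : ZMod n, (if IsUnit (y - x) then chi n (y * b) else 0) := by
    refine Fintype.sum_equiv (Equiv.addLeft x) _ _ fun z => ?_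
    simp [Equiv.coe_addLeft, add_sub_cancel_left]
  rw [← h2, sum_units n (fun z => chi n ((x + z) * b))]
  rw [Wm, Matrix.of_apply, cEig, Finset.mul_sum]
  refine Finset.sum_congr rfl fun u _ => ?_
  rw [← AddChar.map_add_eq_mul]
  congr 1
  ring

lemma spectrum_eq (n : ℕ) [NeZero n] (hn : 1 < n) :
    spectrum ℂ (adjMat (ucg n)) = Set.range (cEig n) := by
  obtain ⟨u, hu⟩ := isUnit_Wm n
  have h : adjMat (ucg n) = (u : Matrix (ZMod n) (ZMod n) ℂ) * Matrix.diagonal (cEig n)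
      * ((u⁻¹ : (Matrix (ZMod n) (ZMod n) ℂ)ˣ) : Matrix (ZMod n) (ZMod n) ℂ) := by
    have h2 := adj_mul_Wm n hn
    rw [← hu] at h2
    have h3 : adjMat (ucg n) * (u : Matrix (ZMod n) (ZMod n) ℂ)
        * ((u⁻¹ : (Matrix (ZMod n) (ZMod n) ℂ)ˣ) : Matrix (ZMod n) (ZMod n) ℂ)
        = (u : Matrix (ZMod n) (ZMod n) ℂ) * Matrix.diagonal (cEig n)
        * ((u⁻¹ : (Matrix (ZMod n) (ZMod n) ℂ)ˣ) : Matrix (ZMod n) (ZMod n) ℂ) := by rw [h2]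
    rwa [mul_assoc, Units.mul_inv, mul_one] at h3
  rw [h, spectrum.units_conjugate, spectrum_diagonal]

lemma cEig_zero (n : ℕ) [NeZero n] : cEig n 0 = (n.totient : ℂ) := by
  rw [cEig]
  have : ∀ u : (ZMod n)ˣ, chi n ((0 : ZMod n) * (u : ZMod n)) = 1 := by
    intro u; rw [zero_mul, AddChar.map_zero_eq_one]
  simp_rw [this]
  rw [Finset.sum_const, Finset.card_univ, ZMod.card_units_eq_totient, nsmul_eq_mul, mul_one]

lemma zet_pow_div (n d : ℕ) (hn : n ≠ 0) (hd0 : d ≠ 0) (hd : d ∣ n) :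
    zet n ^ (n / d) = zet d := by
  rw [zet, zet, ← Complex.exp_nat_mul]
  congr 1
  have hdc : (d : ℂ) ≠ 0 := Nat.cast_ne_zero.mpr hd0
  have hnc : (n : ℂ) ≠ 0 := Nat.cast_ne_zero.mpr hn
  rw [Nat.cast_div hd hdc]
  field_simp

lemma sum_dvd_val (n e : ℕ) [NeZero n] (he : e ∣ n) (he0 : e ≠ 0) (f : ZMod n → ℂ) :
    ∑ z : ZMod n, (if e ∣ z.val then f z else 0)
      = ∑ m ∈ Finset.range (n / e), f ((e * m : ℕ) : ZMod n) := by
  rw [← Finset.sum_filter]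
  refine Finset.sum_nbij' (fun z => z.val / e) (fun m => ((e * m : ℕ) : ZMod n))
      ?_ ?_ ?_ ?_ ?_
  · intro z hz
    rw [Finset.mem_range]
    exact Nat.div_lt_div_of_lt_of_dvd he (ZMod.val_lt z)
  · intro m hm
    rw [Finset.mem_range] at hm
    rw [Finset.mem_filter]
    refine ⟨Finset.mem_univ _, ?_⟩
    rw [ZMod.val_cast_of_lt ((Nat.lt_div_iff_mul_lt' he m).mp hm)]
    exact ⟨m, rfl⟩
  · intro z hz
    rw [Finset.mem_filter] at hz
    show ((e * (z.val / e) : ℕ) : ZMod n) = z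
    rw [Nat.mul_div_cancel' hz.2]
    simp [ZMod.natCast_val, ZMod.cast_id]
  · intro m hm
    rw [Finset.mem_range] at hm
    show (((e * m : ℕ) : ZMod n)).val / e = m
    rw [ZMod.val_cast_of_lt ((Nat.lt_div_iff_mul_lt' he m).mp hm),
      Nat.mul_div_cancel_left m (Nat.pos_of_ne_zero he0)]
  · intro z hz
    rw [Finset.mem_filter] at hz
    show f z = f ((e * (z.val / e) : ℕ) : ZMod n)
    rw [Nat.mul_div_cancel' hz.2]
    simp [ZMod.natCast_val, ZMod.cast_id]

lemma cEig_sub (n : ℕ) [NeZero n] (a : ZMod n) :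
    cEig n a = (if a = 0 then (n : ℂ) else 0)
      - ∑ z : ZMod n, (if ¬ IsUnit z then chi n (a * z) else 0) := by
  rw [← sum_chi n a, cEig, ← sum_units n (fun z => chi n (a * z)), ← Finset.sum_sub_distrib]
  refine Finset.sum_congr rfl fun z _ => ?_
  by_cases h : IsUnit z <;> simp [h]

lemma isUnit_zmod_iff (n : ℕ) [NeZero n] (z : ZMod n) :
    IsUnit z ↔ Nat.Coprime z.val n := by
  conv_lhs => rw [← ZMod.natCast_rightInverse z]
  exact ZMod.isUnit_iff_coprime z.val n

lemma pow_dvd_mul_iff (p α v : ℕ) (hp : 0 < p) (hα : 1 ≤ α) :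
    (p ^ α ∣ v * p) ↔ (p ^ (α - 1) ∣ v) := by
  rw [show p ^ α = p ^ (α - 1) * p from by rw [← pow_succ, Nat.sub_add_cancel hα]]
  exact Nat.mul_dvd_mul_iff_right hp

lemma cEig_primePow (n p α : ℕ) [NeZero n] (hp : p.Prime) (hα : 1 ≤ α) (hn : n = p ^ α)
    (a : ZMod n) :
    cEig n a = (if a = 0 then (n : ℂ) else 0)
      - (if p ^ (α - 1) ∣ a.val then ((p ^ (α - 1) : ℕ) : ℂ) else 0) := by
  subst hn
  have hp0 : p ≠ 0 := hp.pos.ne'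
  rw [cEig_sub]
  congr 1
  have hcond : ∀ z : ZMod (p ^ α), (¬ IsUnit z) ↔ p ∣ z.val := by
    intro z
    rw [isUnit_zmod_iff, Nat.coprime_pow_right_iff (by omega),
      Nat.coprime_comm, hp.coprime_iff_not_dvd, not_not]
  have h1 : ∑ z : ZMod (p ^ α), (if ¬ IsUnit z then chi (p ^ α) (a * z) else 0)
      = ∑ z : ZMod (p ^ α), (if p ∣ z.val then chi (p ^ α) (a * z) else 0) :=
    Finset.sum_congr rfl fun z _ => if_congr (hcond z) rfl rfl
  have hpn : p ∣ p ^ α := dvd_pow_self p (by omega)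
  rw [h1, sum_dvd_val (p ^ α) p hpn hp0]
  have hdiv : p ^ α / p = p ^ (α - 1) := by
    nth_rewrite 2 [← pow_one p]
    rw [Nat.pow_div hα hp.pos]
  have hterm : ∀ m : ℕ, chi (p ^ α) (a * ((p * m : ℕ) : ZMod (p ^ α)))
      = (zet (p ^ α) ^ (a.val * p)) ^ m := by
    intro m
    have hmul : a * ((p * m : ℕ) : ZMod (p ^ α)) = ((a.val * (p * m) : ℕ) : ZMod (p ^ α)) := by
      push_cast
      rw [ZMod.natCast_val, ZMod.cast_id]
    rw [hmul, chi_natCast, show a.val * (p * m) = (a.val * p) * m by ring, pow_mul]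
  simp_rw [hterm]
  have hdvd_iff : (p ^ α ∣ a.val * p) ↔ (p ^ (α - 1) ∣ a.val) :=
    pow_dvd_mul_iff p α a.val hp.pos hα
  by_cases hw : p ^ (α - 1) ∣ a.val
  · have hone : zet (p ^ α) ^ (a.val * p) = 1 :=
      ((zet_prim (p ^ α)).pow_eq_one_iff_dvd _).mpr (hdvd_iff.mpr hw)
    rw [if_pos hw, hone, hdiv]
    simp
  · have hne : zet (p ^ α) ^ (a.val * p) ≠ 1 := fun h =>
      hw (hdvd_iff.mp (((zet_prim (p ^ α)).pow_eq_one_iff_dvd _).mp h))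
    rw [if_neg hw, geom_sum_eq hne, hdiv]
    have hx : a.val * p * p ^ (α - 1) = p ^ α * a.val := by
      rw [mul_assoc, mul_comm p (p ^ (α - 1)), ← pow_succ, Nat.sub_add_cancel hα, mul_comm]
    have hNone : (zet (p ^ α) ^ (a.val * p)) ^ p ^ (α - 1) = 1 := by
      rw [← pow_mul]
      exact ((zet_prim (p ^ α)).pow_eq_one_iff_dvd _).mpr ⟨a.val, hx⟩
    rw [hNone, sub_self, zero_div]

lemma ncard_primePow (n p α : ℕ) [NeZero n] (hp : p.Prime) (hα : 2 ≤ α) (hn : n = p ^ α) :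
    (Set.range (cEig n)).ncard = 3 := by
  have hα1 : 1 ≤ α := by omega
  have hBlt : p ^ (α - 1) < n := by
    rw [hn]; exact Nat.pow_lt_pow_right hp.one_lt (by omega)
  have hB1 : 1 < p ^ (α - 1) := Nat.one_lt_pow (by omega) hp.one_lt
  have hn1 : 1 < n := by omega
  haveI : Fact (1 < n) := ⟨hn1⟩
  have hrange : Set.range (cEig n) =
      {(n : ℂ) - ((p ^ (α - 1) : ℕ) : ℂ), -((p ^ (α - 1) : ℕ) : ℂ), 0} := by
    ext x
    simp only [Set.mem_range, Set.mem_insert_iff, Set.mem_singleton_iff]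
    constructor
    · rintro ⟨a, rfl⟩
      rw [cEig_primePow n p α hp hα1 hn]
      rcases eq_or_ne a 0 with rfl | ha
      · left
        rw [if_pos rfl, if_pos (by simp)]
      · by_cases hdvd : p ^ (α - 1) ∣ a.val
        · right; left; rw [if_neg ha, if_pos hdvd]; ring
        · right; right; rw [if_neg ha, if_neg hdvd]; ring
    · intro hx
      rcases hx with rfl | rfl | rfl
      · exact ⟨0, by rw [cEig_primePow n p α hp hα1 hn, if_pos rfl, if_pos (by simp)]⟩
      · refine ⟨((p ^ (α - 1) : ℕ) : ZMod n), ?_⟩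
        rw [cEig_primePow n p α hp hα1 hn]
        have hval : ((p ^ (α - 1) : ℕ) : ZMod n).val = p ^ (α - 1) :=
          ZMod.val_cast_of_lt hBlt
        rw [if_neg (fun h0 => by rw [h0, ZMod.val_zero] at hval; omega),
          if_pos (by rw [hval])]
        ring
      · refine ⟨1, ?_⟩
        rw [cEig_primePow n p α hp hα1 hn]
        have hval : (1 : ZMod n).val = 1 := ZMod.val_one n
        rw [if_neg one_ne_zero, if_neg (fun hdvd => by
          rw [hval] at hdvd
          have := Nat.le_of_dvd one_pos hdvd
          omega)]
        ring
  rw [hrange]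
  have hB0 : ((p ^ (α - 1) : ℕ) : ℂ) ≠ 0 := Nat.cast_ne_zero.mpr (by omega)
  have hN0 : ((n : ℕ) : ℂ) ≠ 0 := Nat.cast_ne_zero.mpr (by omega)
  have hd1 : (n : ℂ) - ((p ^ (α - 1) : ℕ) : ℂ) ∉
      ({-((p ^ (α - 1) : ℕ) : ℂ), 0} : Set ℂ) := by
    simp only [Set.mem_insert_iff, Set.mem_singleton_iff]
    push_neg
    constructor
    · intro h
      exact hN0 (by linear_combination h)
    · intro h
      have h2 : ((n : ℕ) : ℂ) = ((p ^ (α - 1) : ℕ) : ℂ) := by linear_combination h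
      exact absurd (Nat.cast_inj.mp h2) (by omega)
  have hd2 : -((p ^ (α - 1) : ℕ) : ℂ) ∉ ({0} : Set ℂ) := by
    simp only [Set.mem_singleton_iff, neg_eq_zero]
    exact hB0
  rw [Set.ncard_insert_of_notMem hd1, Set.ncard_insert_of_notMem hd2,
    Set.ncard_singleton]

lemma ncard_prime (n : ℕ) [NeZero n] (hp : n.Prime) :
    (Set.range (cEig n)).ncard = 2 := by
  haveI : Fact (1 < n) := ⟨hp.one_lt⟩
  have he : ∀ a : ZMod n, cEig n a = (if a = 0 then (n : ℂ) else 0) - 1 := by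
    intro a
    rw [cEig_primePow n n 1 hp le_rfl (pow_one n).symm]
    simp
  have hrange : Set.range (cEig n) = {(n : ℂ) - 1, 0 - 1} := by
    ext x
    simp only [Set.mem_range, Set.mem_insert_iff, Set.mem_singleton_iff]
    constructor
    · rintro ⟨a, rfl⟩
      rw [he a]
      rcases eq_or_ne a 0 with rfl | ha
      · left; rw [if_pos rfl]
      · right; rw [if_neg ha]
    · intro hx
      rcases hx with rfl | rfl
      · exact ⟨0, by rw [he 0, if_pos rfl]⟩
      · exact ⟨1, by rw [he 1, if_neg one_ne_zero]⟩
  rw [hrange]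
  refine Set.ncard_pair ?_
  intro h
  have h2 : ((n : ℕ) : ℂ) = 0 := by linear_combination h
  exact Nat.cast_ne_zero.mpr (NeZero.ne n) h2

lemma sum_all_chi (n : ℕ) [NeZero n] (hn : 1 < n) : ∑ z : ZMod n, chi n z = 0 := by
  haveI : Fact (1 < n) := ⟨hn⟩
  have h := sum_chi n 1
  simp_rw [one_mul] at h
  rw [h, if_neg one_ne_zero]

lemma sum_chi_units_prime (p : ℕ) [NeZero p] (hp : p.Prime) :
    ∑ v : (ZMod p)ˣ, chi p (v : ZMod p) = -1 := by
  haveI : Fact p.Prime := ⟨hp⟩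
  rw [← sum_units p (fun z => chi p z)]
  have h2 : ∀ z : ZMod p, (if IsUnit z then chi p z else 0)
      = chi p z - (if z = 0 then chi p z else 0) := by
    intro z
    rcases eq_or_ne z 0 with rfl | hz
    · simp [not_isUnit_zero]
    · simp [hz, isUnit_iff_ne_zero.mpr hz]
  rw [Finset.sum_congr rfl (fun z _ => h2 z), Finset.sum_sub_distrib,
    sum_all_chi p hp.one_lt, Finset.sum_ite_eq' Finset.univ (0 : ZMod p) (chi p)]
  simp

lemma sum_chi_units_mul (p q : ℕ) (hp : p.Prime) (hq : q.Prime) (hpq : p ≠ q)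
    [NeZero (p * q)] :
    ∑ v : (ZMod (p * q))ˣ, chi (p * q) (v : ZMod (p * q)) = 1 := by
  haveI : NeZero p := ⟨hp.pos.ne'⟩
  haveI : NeZero q := ⟨hq.pos.ne'⟩
  have hco : Nat.Coprime p q := (Nat.coprime_primes hp hq).mpr hpq
  have hp2 := hp.two_le
  have hq2 := hq.two_le
  have hN1 : 1 < p * q := by nlinarith
  have key : ∀ z : ZMod (p * q), (if IsUnit z then chi (p * q) z else 0)
      = chi (p * q) z - (if p ∣ z.val then chi (p * q) z else 0)
        - (if q ∣ z.val then chi (p * q) z else 0)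
        + (if p * q ∣ z.val then chi (p * q) z else 0) := by
    intro z
    have hunit : IsUnit z ↔ ¬ p ∣ z.val ∧ ¬ q ∣ z.val := by
      rw [isUnit_zmod_iff, Nat.coprime_mul_iff_right,
        Nat.coprime_comm (m := p) (n := z.val), hp.coprime_iff_not_dvd,
        Nat.coprime_comm (m := q) (n := z.val), hq.coprime_iff_not_dvd]
    have hpq_dvd : p * q ∣ z.val ↔ (p ∣ z.val ∧ q ∣ z.val) := by
      constructor
      · intro h
        exact ⟨dvd_trans (dvd_mul_right p q) h, dvd_trans (dvd_mul_left q p) h⟩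
      · rintro ⟨h1, h2⟩
        exact Nat.Coprime.mul_dvd_of_dvd_of_dvd hco h1 h2
    by_cases h1 : p ∣ z.val <;> by_cases h2 : q ∣ z.val <;>
      simp [hunit, h1, h2, hpq_dvd] <;> ring
  have hTp : ∑ z : ZMod (p * q), (if p ∣ z.val then chi (p * q) z else 0) = 0 := by
    rw [sum_dvd_val (p * q) p (dvd_mul_right p q) hp.pos.ne',
      Nat.mul_div_cancel_left q hp.pos]
    have hNq : p * q / q = p := Nat.mul_div_cancel p hq.pos
    have hzq : zet (p * q) ^ p = zet q := by
      have h := zet_pow_div (p * q) q (by positivity) hq.pos.ne' (dvd_mul_left q p)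
      rwa [hNq] at h
    have hterm : ∀ m : ℕ, chi (p * q) ((p * m : ℕ) : ZMod (p * q)) = zet q ^ m := by
      intro m
      rw [chi_natCast, pow_mul, hzq]
    simp_rw [hterm]
    exact (zet_prim q).geom_sum_eq_zero hq.one_lt
  have hTq : ∑ z : ZMod (p * q), (if q ∣ z.val then chi (p * q) z else 0) = 0 := by
    rw [sum_dvd_val (p * q) q (dvd_mul_left q p) hq.pos.ne',
      Nat.mul_div_cancel p hq.pos]
    have hNp : p * q / p = q := Nat.mul_div_cancel_left q hp.pos
    have hzp : zet (p * q) ^ q = zet p := by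
      have h := zet_pow_div (p * q) p (by positivity) hp.pos.ne' (dvd_mul_right p q)
      rwa [hNp] at h
    have hterm : ∀ m : ℕ, chi (p * q) ((q * m : ℕ) : ZMod (p * q)) = zet p ^ m := by
      intro m
      rw [chi_natCast, pow_mul, hzp]
    simp_rw [hterm]
    exact (zet_prim p).geom_sum_eq_zero hp.one_lt
  have hTpq : ∑ z : ZMod (p * q), (if p * q ∣ z.val then chi (p * q) z else 0) = 1 := by
    rw [sum_dvd_val (p * q) (p * q) dvd_rfl (by positivity), Nat.div_self (by positivity),
      Finset.sum_range_one]
    simp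
  rw [← sum_units (p * q) (fun z => chi (p * q) z),
    Finset.sum_congr rfl (fun z _ => key z), Finset.sum_add_distrib,
    Finset.sum_sub_distrib, Finset.sum_sub_distrib, sum_all_chi (p * q) hN1,
    hTp, hTq, hTpq]
  ring

lemma cEig_div (n d : ℕ) [NeZero n] [NeZero d] (hd : d ∣ n) :
    ∃ K : ℕ, 0 < K ∧ n.totient = K * d.totient ∧
      cEig n ((n / d : ℕ) : ZMod n) = (K : ℂ) * ∑ v : (ZMod d)ˣ, chi d (v : ZMod d) := by
  classical
  set f := ZMod.unitsMap hd with hf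
  have hsurj : Function.Surjective f := ZMod.unitsMap_surjective hd
  refine ⟨Nat.card f.ker, Nat.card_pos, ?_, ?_⟩
  · have hcard := Subgroup.card_eq_card_quotient_mul_card_subgroup f.ker
    have hq : Nat.card ((ZMod n)ˣ ⧸ f.ker) = Nat.card (ZMod d)ˣ :=
      Nat.card_congr (QuotientGroup.quotientKerEquivOfSurjective f hsurj).toEquiv
    rw [hq] at hcard
    have h1 : Nat.card (ZMod n)ˣ = n.totient := by
      rw [Nat.card_eq_fintype_card, ZMod.card_units_eq_totient]
    have h2 : Nat.card (ZMod d)ˣ = d.totient := by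
      rw [Nat.card_eq_fintype_card, ZMod.card_units_eq_totient]
    rw [h1, h2] at hcard
    rw [hcard, Nat.mul_comm]
  · have hstep : ∀ u : (ZMod n)ˣ, chi n (((n / d : ℕ) : ZMod n) * (u : ZMod n))
        = chi d ((f u : ZMod d)) := by
      intro u
      have hl : ((n / d : ℕ) : ZMod n) * (u : ZMod n)
          = ((n / d * (u : ZMod n).val : ℕ) : ZMod n) := by
        push_cast
        rw [ZMod.natCast_val, ZMod.cast_id]
      have hr : ((f u : ZMod d)) = (((u : ZMod n).val : ℕ) : ZMod d) := by
        rw [hf, ZMod.unitsMap_def, Units.coe_map]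
        simp [ZMod.castHom_apply, ZMod.natCast_val]
      rw [hl, hr, chi_natCast, chi_natCast, pow_mul,
        zet_pow_div n d (NeZero.ne n) (NeZero.ne d) hd]
    rw [cEig]
    simp_rw [hstep]
    rw [show (∑ u : (ZMod n)ˣ, chi d ((f u : ZMod d)))
        = ∑ u : (ZMod n)ˣ, (fun v : (ZMod d)ˣ => chi d (v : ZMod d)) (f u) from rfl,
      Finset.sum_comp ((fun v : (ZMod d)ˣ => chi d (v : ZMod d))) f,
      Finset.image_univ_of_surjective hsurj]
    have hfib : ∀ b : (ZMod d)ˣ,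
        (Finset.univ.filter (fun u => f u = b)).card = Nat.card f.ker := by
      intro b
      have h1 : (Finset.univ.filter (fun u => f u = b)).card
          = Fintype.card {u : (ZMod n)ˣ // f u = b} := (Fintype.card_subtype _).symm
      rw [h1, ← Nat.card_eq_fintype_card]
      exact Nat.card_congr ((Equiv.subtypeEquivRight (fun u => by
        simp [Set.mem_preimage])).trans (MonoidHom.fiberEquivKerOfSurjective hsurj b))
    simp_rw [hfib]
    rw [← Finset.smul_sum, nsmul_eq_mul]

lemma ncard_ge_four (n p q : ℕ) [NeZero n] (hp : p.Prime) (hq : q.Prime) (hpq : p ≠ q)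
    (hpn : p ∣ n) (hqn : q ∣ n) : 4 ≤ (Set.range (cEig n)).ncard := by
  haveI : NeZero p := ⟨hp.pos.ne'⟩
  haveI : NeZero q := ⟨hq.pos.ne'⟩
  haveI : NeZero (p * q) := ⟨Nat.mul_ne_zero hp.pos.ne' hq.pos.ne'⟩
  have hco : Nat.Coprime p q := (Nat.coprime_primes hp hq).mpr hpq
  have hpqn : p * q ∣ n := Nat.Coprime.mul_dvd_of_dvd_of_dvd hco hpn hqn
  obtain ⟨Kp, hKp0, hKp, hvp⟩ := cEig_div n p hpn
  obtain ⟨Kq, hKq0, hKq, hvq⟩ := cEig_div n q hqn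
  obtain ⟨Kr, hKr0, hKr, hvr⟩ := cEig_div n (p * q) hpqn
  rw [sum_chi_units_prime p hp] at hvp
  rw [sum_chi_units_prime q hq] at hvq
  rw [sum_chi_units_mul p q hp hq hpq] at hvr
  have m0 : (n.totient : ℂ) ∈ Set.range (cEig n) := ⟨0, cEig_zero n⟩
  have m1 : -(Kp : ℂ) ∈ Set.range (cEig n) := ⟨_, by rw [hvp]; ring⟩
  have m2 : -(Kq : ℂ) ∈ Set.range (cEig n) := ⟨_, by rw [hvq]; ring⟩
  have m3 : (Kr : ℂ) ∈ Set.range (cEig n) := ⟨_, by rw [hvr]; ring⟩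
  have hφ : 0 < n.totient := Nat.totient_pos.mpr (Nat.pos_of_ne_zero (NeZero.ne n))
  have hφp : p.totient = p - 1 := Nat.totient_prime hp
  have hφq : q.totient = q - 1 := Nat.totient_prime hq
  have hφr : (p * q).totient = (p - 1) * (q - 1) := by
    rw [Nat.totient_mul hco, hφp, hφq]
  have hp2 := hp.two_le
  have hq2 := hq.two_le
  have h2 : 2 ≤ (p - 1) * (q - 1) := by
    rcases Nat.lt_or_ge p 3 with h | h
    · have hq3 : 3 ≤ q := by omega
      calc 2 ≤ q - 1 := by omega
      _ = 1 * (q - 1) := (one_mul _).symm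
      _ ≤ (p - 1) * (q - 1) := Nat.mul_le_mul_right _ (by omega)
    · calc 2 ≤ p - 1 := by omega
      _ = (p - 1) * 1 := (mul_one _).symm
      _ ≤ (p - 1) * (q - 1) := Nat.mul_le_mul_left _ (by omega)
  have hKpKq : Kp ≠ Kq := by
    intro h
    rw [hφp] at hKp
    rw [hφq] at hKq
    rw [h] at hKp
    have h3 : p - 1 = q - 1 := Nat.eq_of_mul_eq_mul_left hKq0 (by omega)
    omega
  have hKr_lt : Kr < n.totient := by
    rw [hKr, hφr]
    have h4 := Nat.mul_le_mul_left Kr h2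
    omega
  have cast_ne_neg : ∀ a b : ℕ, 0 < a → (a : ℂ) ≠ -(b : ℂ) := by
    intro a b ha h
    have h5 : ((a + b : ℕ) : ℂ) = 0 := by push_cast; linear_combination h
    have h6 : a + b = 0 := Nat.cast_eq_zero.mp h5
    omega
  have hne3 : -(Kp : ℂ) ≠ -(Kq : ℂ) := by
    intro h
    exact hKpKq (Nat.cast_inj.mp (neg_inj.mp h))
  have h23 : (Kr : ℂ) ∉ ({-(Kp : ℂ), -(Kq : ℂ)} : Set ℂ) := by
    simp only [Set.mem_insert_iff, Set.mem_singleton_iff]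
    push_neg
    exact ⟨cast_ne_neg Kr Kp hKr0, cast_ne_neg Kr Kq hKr0⟩
  have h1 : (n.totient : ℂ) ∉ ({(Kr : ℂ), -(Kp : ℂ), -(Kq : ℂ)} : Set ℂ) := by
    simp only [Set.mem_insert_iff, Set.mem_singleton_iff]
    push_neg
    refine ⟨?_, cast_ne_neg _ Kp hφ, cast_ne_neg _ Kq hφ⟩
    intro h
    have h7 : n.totient = Kr := Nat.cast_inj.mp h
    omega
  have hsub : ({(n.totient : ℂ), (Kr : ℂ), -(Kp : ℂ), -(Kq : ℂ)} : Set ℂ)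
      ⊆ Set.range (cEig n) := by
    intro x hx
    rcases hx with rfl | rfl | rfl | rfl
    exacts [m0, m3, m1, m2]
  have hcard : ({(n.totient : ℂ), (Kr : ℂ), -(Kp : ℂ), -(Kq : ℂ)} : Set ℂ).ncard = 4 := by
    rw [Set.ncard_insert_of_notMem h1, Set.ncard_insert_of_notMem h23,
      Set.ncard_pair hne3]
  calc 4 = _ := hcard.symm
  _ ≤ (Set.range (cEig n)).ncard := Set.ncard_le_ncard hsub (Set.finite_range _)

end Stmt6

/-- the unitary Cayley graph `X_n` is strongly regular (exactly three
distinct adjacency eigenvalues) iff `n` is a composite prime power `p^α`, `α ≥ 2`. -/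
theorem stmt_6 (n : ℕ) [NeZero n] :
    (spectrum ℂ (adjMat (ucg n))).ncard = 3 ↔
      ∃ p α : ℕ, p.Prime ∧ 2 ≤ α ∧ n = p ^ α := by
  rcases eq_or_ne n 1 with rfl | hne1
  · have hM : adjMat (ucg 1) = 0 := by
      ext i j
      rw [adjMat, Matrix.of_apply, if_neg, Matrix.zero_apply]
      rintro ⟨hne, -⟩
      exact hne (Subsingleton.elim i j)
    haveI : Nontrivial (Matrix (ZMod 1) (ZMod 1) ℂ) := by
      refine ⟨0, 1, fun h => ?_⟩
      have h00 := Matrix.ext_iff.mpr h 0 0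
      simp [Matrix.one_apply] at h00
    rw [hM, spectrum.zero_eq, Set.ncard_singleton]
    constructor
    · intro h
      exact absurd h (by norm_num)
    · rintro ⟨p, α, hp, hα, hn⟩
      have h2 := hp.two_le
      have hle : p ≤ p ^ α := Nat.le_self_pow (by omega) p
      omega
  · have hn1 : 1 < n := by
      have := Nat.pos_of_ne_zero (NeZero.ne n)
      omega
    rw [Stmt6.spectrum_eq n hn1]
    constructor
    · intro h3
      by_contra hno
      push_neg at hno
      by_cases hpp : IsPrimePow n
      · obtain ⟨p, k, hp, hk, hn⟩ := hpp
        have hpnat : p.Prime := Nat.prime_iff.mpr hp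
        by_cases hk2 : 2 ≤ k
        · exact hno p k hpnat hk2 hn.symm
        · have hk1 : k = 1 := by omega
          have hnp : n.Prime := by
            rw [← hn, hk1, pow_one]
            exact hpnat
          have := Stmt6.ncard_prime n hnp
          omega
      · have h2 : 1 < n.primeFactors.card := by
          rcases Nat.lt_or_ge n.primeFactors.card 2 with h | h
          · have h0 : n.primeFactors.card = 0 ∨ n.primeFactors.card = 1 := by omega
            rcases h0 with h0 | h0
            · rw [Finset.card_eq_zero] at h0
              rcases Nat.primeFactors_eq_empty.mp h0 with h' | h'
              · exact absurd h' (NeZero.ne n)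
              · exact absurd h' hne1
            · exact absurd (isPrimePow_iff_card_primeFactors_eq_one.mpr h0) hpp
          · exact h
        obtain ⟨p, hpmem, q, hqmem, hpq⟩ := Finset.one_lt_card.mp h2
        rw [Nat.mem_primeFactors] at hpmem hqmem
        have h4 := Stmt6.ncard_ge_four n p q hpmem.1 hqmem.1 hpq hpmem.2.1 hqmem.2.1
        omega
    · rintro ⟨p, α, hp, hα, rfl⟩
      exact Stmt6.ncard_primePow (p ^ α) p α hp hα rfl
end

section
/- Let n, m be coprime positive integers, D_1 a set of divisors of n (excluding n) and D_2 a set of divisors of m (excluding m). Then the tensor product ICG_n(D_1) ⊗ ICG_m(D_2) is isomorphic to ICG_{nm}({d₁d₂ : d₁ ∈ D_1, d₂ ∈ D_2}), via the map sending (a,b) to the residue of am + bn modulo nm. -/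
/-- The integral circulant graph `ICG_n(D)`: vertices `ℤ_n`, `a ~ b` iff `a ≠ b` and
`gcd(a - b, n) ∈ D`. -/
def ICG (n : ℕ) (D : Set ℕ) : SimpleGraph (ZMod n) :=
  SimpleGraph.fromRel (fun a b => Nat.gcd (a - b).val n ∈ D)

/-- The tensor (categorical) product of graphs. -/
def tensorProd {V W : Type*} (G : SimpleGraph V) (H : SimpleGraph W) :
    SimpleGraph (V × W) where
  Adj u v := G.Adj u.1 v.1 ∧ H.Adj u.2 v.2
  symm := ⟨fun _ _ h => ⟨h.1.symm, h.2.symm⟩⟩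
  loopless := ⟨fun u h => G.irrefl h.1⟩

lemma aux_gcd_val_neg {n : ℕ} [NeZero n] (x : ZMod n) :
    Nat.gcd ((-x).val) n = Nat.gcd x.val n := by
  rcases eq_or_ne x 0 with h | h
  · simp [h]
  · haveI : NeZero x := ⟨h⟩
    have hx : x.val ≤ n := (ZMod.val_lt x).le
    rw [ZMod.val_neg_of_ne_zero, ← Nat.gcd_sub_self_right (Nat.sub_le n x.val),
      Nat.sub_sub_self hx, Nat.gcd_sub_self_left hx, Nat.gcd_comm]

lemma aux_ICG_adj {n : ℕ} [NeZero n] (D : Set ℕ) (a b : ZMod n) :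
    (ICG n D).Adj a b ↔ a ≠ b ∧ Nat.gcd (a - b).val n ∈ D := by
  have h : Nat.gcd (b - a).val n = Nat.gcd (a - b).val n := by
    have := aux_gcd_val_neg (a - b); rwa [neg_sub] at this
  simp [ICG, SimpleGraph.fromRel_adj, h]

lemma aux_gcd_mod {s N : ℕ} : Nat.gcd (s % N) N = Nat.gcd s N := by
  rw [Nat.gcd_comm s N, Nat.gcd_rec N s]

/-- key gcd computation -/
lemma aux_key_gcd {n m : ℕ} [NeZero n] [NeZero m] (hco : n.Coprime m)
    (a : ZMod n) (b : ZMod m) :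
    Nat.gcd (((a.val * m + b.val * n : ℕ) : ZMod (n * m)).val) (n * m)
      = Nat.gcd a.val n * Nat.gcd b.val m := by
  rw [ZMod.val_natCast, aux_gcd_mod, Nat.Coprime.gcd_mul _ hco]
  congr 1
  · rw [add_comm, Nat.gcd_mul_right_add_left,
      Nat.Coprime.gcd_mul_right_cancel _ hco.symm]
  · rw [Nat.gcd_mul_right_add_left, Nat.Coprime.gcd_mul_right_cancel _ hco]

lemma aux_dvd_val_sub {n : ℕ} [NeZero n] (a a' : ZMod n) :
    (n : ℤ) ∣ (((a.val : ℤ) - (a'.val : ℤ)) - ((a - a').val : ℤ)) := by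
  rw [← ZMod.intCast_zmod_eq_zero_iff_dvd]
  push_cast
  simp [ZMod.natCast_val, ZMod.cast_id]

/-- the map respects subtraction (as congruence mod n*m) -/
lemma aux_phi_sub {n m : ℕ} [NeZero n] [NeZero m] (a a' : ZMod n) (b b' : ZMod m) :
    (((a - a').val * m + (b - b').val * n : ℕ) : ZMod (n * m))
      = ((a.val * m + b.val * n : ℕ) : ZMod (n * m))
        - ((a'.val * m + b'.val * n : ℕ) : ZMod (n * m)) := by
  have h1 := aux_dvd_val_sub a a'
  have h2 := aux_dvd_val_sub b b'
  have key : ((n * m : ℕ) : ℤ) ∣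
      ((((a.val * m + b.val * n : ℕ) : ℤ) - ((a'.val * m + b'.val * n : ℕ) : ℤ))
        - (((a - a').val * m + (b - b').val * n : ℕ) : ℤ)) := by
    push_cast
    have heq : ((((a.val : ℤ) * m + b.val * n) - ((a'.val : ℤ) * m + b'.val * n))
        - (((a - a').val : ℤ) * m + ((b - b').val : ℤ) * n))
        = (((a.val : ℤ) - a'.val) - ((a - a').val : ℤ)) * m
          + (((b.val : ℤ) - b'.val) - ((b - b').val : ℤ)) * n := by ring
    rw [heq]
    push_cast
    refine dvd_add (mul_dvd_mul_right h1 m) ?_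
    rw [show ((n : ℤ) * m) = (m : ℤ) * n by ring]
    exact mul_dvd_mul_right h2 n
  have hmod : (((a - a').val * m + (b - b').val * n : ℕ) : ℤ)
      ≡ ((a.val * m + b.val * n : ℕ) : ℤ) - ((a'.val * m + b'.val * n : ℕ) : ℤ)
        [ZMOD ((n * m : ℕ) : ℤ)] := Int.modEq_iff_dvd.mpr key
  have := (ZMod.intCast_eq_intCast_iff _ _ (n * m)).mpr (by exact_mod_cast hmod)
  push_cast at this ⊢
  linear_combination this

/-- for coprime `n, m` and divisor sets `D₁ ⊆ D_n`, `D₂ ⊆ D_m`, the map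
`(a,b) ↦ am + bn (mod nm)` is a graph isomorphism
`ICG_n(D₁) ⊗ ICG_m(D₂) ≅ ICG_{nm}({d₁d₂ : d₁ ∈ D₁, d₂ ∈ D₂})`. -/
theorem stmt_16 (n m : ℕ) (hn : 0 < n) (hm : 0 < m) (hco : n.Coprime m)
    (D₁ D₂ : Set ℕ) (hD₁ : ∀ d ∈ D₁, d ∣ n ∧ d ≠ n) (hD₂ : ∀ d ∈ D₂, d ∣ m ∧ d ≠ m) :
    Function.Bijective
        (fun ab : ZMod n × ZMod m => ((ab.1.val * m + ab.2.val * n : ℕ) : ZMod (n * m)))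
      ∧ ∀ u v : ZMod n × ZMod m,
          (tensorProd (ICG n D₁) (ICG m D₂)).Adj u v ↔
            (ICG (n * m) {e | ∃ d₁ ∈ D₁, ∃ d₂ ∈ D₂, e = d₁ * d₂}).Adj
              ((u.1.val * m + u.2.val * n : ℕ) : ZMod (n * m))
              ((v.1.val * m + v.2.val * n : ℕ) : ZMod (n * m)) := by
  haveI : NeZero n := ⟨hn.ne'⟩
  haveI : NeZero m := ⟨hm.ne'⟩
  haveI : NeZero (n * m) := ⟨Nat.mul_ne_zero hn.ne' hm.ne'⟩
  have hinj : Function.Injective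
      (fun ab : ZMod n × ZMod m => ((ab.1.val * m + ab.2.val * n : ℕ) : ZMod (n * m))) := by
    intro ⟨a, b⟩ ⟨a', b'⟩ h
    simp only at h
    have hsub := aux_phi_sub a a' b b'
    rw [h, sub_self] at hsub
    have h0 : (n * m) ∣ ((a - a').val * m + (b - b').val * n) := by
      rwa [ZMod.natCast_eq_zero_iff] at hsub
    have hva : (a - a').val < n := ZMod.val_lt _
    have hvb : (b - b').val < m := ZMod.val_lt _
    have hb1 : (a - a').val * m + (b - b').val * n < n * m + n * m := by
      have h1 : (a - a').val * m ≤ (n - 1) * m :=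
        Nat.mul_le_mul_right m (Nat.le_pred_of_lt hva)
      have h2 : (b - b').val * n ≤ (m - 1) * n :=
        Nat.mul_le_mul_right n (Nat.le_pred_of_lt hvb)
      have h3 : (n - 1) * m + (m - 1) * n < n * m + n * m := by
        have e1 : (n - 1) * m ≤ n * m := Nat.mul_le_mul_right m (Nat.sub_le n 1)
        have e2 : (m - 1) * n < m * n :=
          Nat.mul_lt_mul_of_lt_of_le (Nat.sub_lt hm Nat.one_pos) le_rfl hn
        calc (n - 1) * m + (m - 1) * n < n * m + m * n := by omega
          _ = n * m + n * m := by rw [mul_comm m n]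
      omega
    rcases h0 with ⟨k, hk⟩
    have hk2 : k < 2 := by
      by_contra hge
      push_neg at hge
      have hmul : n * m * 2 ≤ n * m * k := Nat.mul_le_mul_left _ hge
      have hlt : n * m * k < n * m + n * m := hk ▸ hb1
      omega
    interval_cases k
    · simp only [Nat.mul_zero] at hk
      have ha : (a - a').val = 0 := by
        have h4 := Nat.eq_zero_of_add_eq_zero_right hk
        exact (Nat.mul_eq_zero.mp h4).resolve_right hm.ne'
      have hb : (b - b').val = 0 := by
        have h4 := Nat.eq_zero_of_add_eq_zero_left hk
        exact (Nat.mul_eq_zero.mp h4).resolve_right hn.ne'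
      have ha' : a = a' := by
        have h5 := (ZMod.val_eq_zero _).mp ha; rwa [sub_eq_zero] at h5
      have hb' : b = b' := by
        have h5 := (ZMod.val_eq_zero _).mp hb; rwa [sub_eq_zero] at h5
      simp [ha', hb']
    · exfalso
      have hd1 : n ∣ (a - a').val * m + (b - b').val * n := ⟨m, by rw [hk]; ring⟩
      have hd2 : n ∣ (b - b').val * n := dvd_mul_left n _
      have hd3 : n ∣ (a - a').val * m := (Nat.dvd_add_iff_left hd2).mpr hd1
      have hd4 : n ∣ (a - a').val := hco.dvd_of_dvd_mul_right hd3
      have ha0 : (a - a').val = 0 := Nat.eq_zero_of_dvd_of_lt hd4 hva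
      rw [ha0] at hk
      simp only [Nat.zero_mul, Nat.zero_add, Nat.mul_one] at hk
      have : (b - b').val = m := Nat.eq_of_mul_eq_mul_right hn (by rw [hk, Nat.mul_comm])
      omega
  constructor
  · rw [Fintype.bijective_iff_injective_and_card]
    exact ⟨hinj, by simp [ZMod.card]⟩
  · intro u v
    show ((ICG n D₁).Adj u.1 v.1 ∧ (ICG m D₂).Adj u.2 v.2) ↔ _
    rw [aux_ICG_adj, aux_ICG_adj, aux_ICG_adj, ← aux_phi_sub u.1 v.1 u.2 v.2,
      aux_key_gcd hco]
    constructor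
    · rintro ⟨⟨h1, hg1⟩, ⟨h2, hg2⟩⟩
      refine ⟨fun heq => h1 ?_, ⟨_, hg1, _, hg2, rfl⟩⟩
      have := hinj heq
      exact congrArg Prod.fst this
    · rintro ⟨hne, d₁, hd1, d₂, hd2, heq⟩
      set g₁ := Nat.gcd (u.1 - v.1).val n with hg₁
      set g₂ := Nat.gcd (u.2 - v.2).val m with hg₂
      have hg1n : g₁ ∣ n := Nat.gcd_dvd_right _ _
      have hg2m : g₂ ∣ m := Nat.gcd_dvd_right _ _
      have hd1n : d₁ ∣ n := (hD₁ d₁ hd1).1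
      have hd2m : d₂ ∣ m := (hD₂ d₂ hd2).1
      have hco1 : Nat.Coprime g₁ d₂ :=
        Nat.Coprime.coprime_dvd_right hd2m (Nat.Coprime.coprime_dvd_left hg1n hco)
      have hco2 : Nat.Coprime d₁ g₂ :=
        Nat.Coprime.coprime_dvd_right hg2m (Nat.Coprime.coprime_dvd_left hd1n hco)
      have e1 : g₁ ∣ d₁ := hco1.dvd_of_dvd_mul_right
        (show g₁ ∣ d₁ * d₂ by rw [← heq]; exact dvd_mul_right _ _)
      have e2 : d₁ ∣ g₁ := hco2.dvd_of_dvd_mul_right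
        (show d₁ ∣ g₁ * g₂ by rw [heq]; exact dvd_mul_right _ _)
      have hgd1 : g₁ = d₁ := Nat.dvd_antisymm e1 e2
      have hd1pos : 0 < d₁ := Nat.pos_of_dvd_of_pos hd1n hn
      have hgd2 : g₂ = d₂ := by
        have hg1pos : 0 < g₁ := by rw [hgd1]; exact hd1pos
        have h' : g₁ * g₂ = g₁ * d₂ := by rw [heq, hgd1]
        exact Nat.eq_of_mul_eq_mul_left hg1pos h'
      have hu1 : u.1 ≠ v.1 := by
        intro h
        have : (u.1 - v.1).val = 0 := by simp [h]
        rw [hg₁, this, Nat.gcd_zero_left] at hgd1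
        exact (hD₁ d₁ hd1).2 hgd1.symm
      have hu2 : u.2 ≠ v.2 := by
        intro h
        have : (u.2 - v.2).val = 0 := by simp [h]
        rw [hg₂, this, Nat.gcd_zero_left] at hgd2
        exact (hD₂ d₂ hd2).2 hgd2.symm
      exact ⟨⟨hu1, hgd1 ▸ hd1⟩, ⟨hu2, hgd2 ▸ hd2⟩⟩
end

section
/- Let n be composite, k a divisor of n with 2 ≤ k ≤ n-1, and m a divisor of n/k with 2 ≤ m ≤ n/k - 1. Then the integral circulant graph ICG_n(D) with D = {d ∈ D_n : k ∤ d} ∪ {km·d' : d' ∈ D_{n/(km)}} has spectrum {(n - n/k + n/(km) - 1)^(1), (n/(km) - 1)^(km-k), (-n/k + n/(km) - 1)^(k-1), (-1)^(n-mk)}; in particular it has exactly four distinct eigenvalues. -/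
open Polynomial Matrix
open scoped Classical

lemma zpow_congr {n : ℕ} (ζ : ℂ) (hζ : ζ ^ n = 1) {a b : ℕ} (h : a ≡ b [MOD n]) :
    ζ ^ a = ζ ^ b := by
  conv_lhs => rw [← Nat.div_add_mod a n]
  conv_rhs => rw [← Nat.div_add_mod b n]
  rw [pow_add, pow_add, pow_mul, pow_mul, hζ, h]
  simp

lemma geom_sum_if (w : ℂ) (e : ℕ) (hw : w ^ e = 1) (he : e ≠ 0) :
    ∑ t ∈ Finset.range e, w ^ t = if w = 1 then (e : ℂ) else 0 := by
  split_ifs with h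
  · simp [h]
  · rw [geom_sum_eq h e, hw, sub_self, zero_div]

lemma multiples_eq (n : ℕ) [NeZero n] (d : ℕ) (hd : d ∣ n) :
    Finset.univ.filter (fun y : ZMod n => d ∣ y.val)
      = (Finset.range (n / d)).image (fun t => ((d * t : ℕ) : ZMod n)) := by
  have hn : n ≠ 0 := NeZero.ne n
  have hd0 : d ≠ 0 := by rintro rfl; exact hn (zero_dvd_iff.mp hd)
  have hmul : d * (n / d) = n := Nat.mul_div_cancel' hd
  ext y
  simp only [Finset.mem_filter, Finset.mem_univ, true_and, Finset.mem_image, Finset.mem_range]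
  constructor
  · intro hy
    refine ⟨y.val / d, ?_, ?_⟩
    · exact Nat.div_lt_div_of_lt_of_dvd hd y.val_lt
    · rw [Nat.mul_div_cancel' hy]; exact ZMod.natCast_rightInverse y
  · rintro ⟨t, ht, rfl⟩
    have hlt : d * t < n := by
      calc d * t < d * (n / d) := by
            exact mul_lt_mul_of_pos_left ht (Nat.pos_of_ne_zero hd0)
        _ = n := hmul
    rw [ZMod.val_cast_of_lt hlt]
    exact Dvd.intro t rfl

lemma multiples_card (n : ℕ) [NeZero n] (d : ℕ) (hd : d ∣ n) :
    (Finset.univ.filter (fun y : ZMod n => d ∣ y.val)).card = n / d := by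
  have hn : n ≠ 0 := NeZero.ne n
  have hd0 : d ≠ 0 := by rintro rfl; exact hn (zero_dvd_iff.mp hd)
  have hmul : d * (n / d) = n := Nat.mul_div_cancel' hd
  rw [multiples_eq n d hd, Finset.card_image_of_injOn, Finset.card_range]
  intro t1 h1 t2 h2 h
  simp only [Finset.coe_range, Set.mem_Iio] at h1 h2
  have l1 : d * t1 < n := by rw [← hmul]; exact mul_lt_mul_of_pos_left h1 (Nat.pos_of_ne_zero hd0)
  have l2 : d * t2 < n := by rw [← hmul]; exact mul_lt_mul_of_pos_left h2 (Nat.pos_of_ne_zero hd0)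
  have : d * t1 = d * t2 := by
    have := congrArg ZMod.val h
    rwa [ZMod.val_cast_of_lt l1, ZMod.val_cast_of_lt l2] at this
  exact Nat.eq_of_mul_eq_mul_left (Nat.pos_of_ne_zero hd0) this

lemma charSum (n : ℕ) [NeZero n] (ζ : ℂ) (hζ : IsPrimitiveRoot ζ n) (d : ℕ) (hd : d ∣ n) (c : ℕ) :
    ∑ y : ZMod n, (if d ∣ y.val then ζ ^ (y.val * c) else 0)
      = if (n / d) ∣ c then ((n / d : ℕ) : ℂ) else 0 := by
  have hn : n ≠ 0 := NeZero.ne n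
  have hd0 : d ≠ 0 := by rintro rfl; exact hn (zero_dvd_iff.mp hd)
  have hmul : d * (n / d) = n := Nat.mul_div_cancel' hd
  have he : n / d ≠ 0 := by
    intro h; rw [h, Nat.mul_zero] at hmul; exact hn hmul.symm
  rw [← Finset.sum_filter, multiples_eq n d hd, Finset.sum_image ?inj]
  case inj =>
    intro t1 h1 t2 h2 h
    simp only [Finset.mem_coe, Finset.mem_range, Finset.coe_range, Set.mem_Iio] at h1 h2
    have l1 : d * t1 < n := by rw [← hmul]; exact mul_lt_mul_of_pos_left h1 (Nat.pos_of_ne_zero hd0)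
    have l2 : d * t2 < n := by rw [← hmul]; exact mul_lt_mul_of_pos_left h2 (Nat.pos_of_ne_zero hd0)
    have : d * t1 = d * t2 := by
      have := congrArg ZMod.val h
      rwa [ZMod.val_cast_of_lt l1, ZMod.val_cast_of_lt l2] at this
    exact Nat.eq_of_mul_eq_mul_left (Nat.pos_of_ne_zero hd0) this
  have hterm : ∀ t ∈ Finset.range (n / d), ζ ^ (((d * t : ℕ) : ZMod n).val * c) = (ζ ^ (d * c)) ^ t := by
    intro t ht
    simp only [Finset.mem_range] at ht
    have hlt : d * t < n := by rw [← hmul]; exact mul_lt_mul_of_pos_left ht (Nat.pos_of_ne_zero hd0)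
    rw [ZMod.val_cast_of_lt hlt, ← pow_mul]
    ring_nf
  rw [Finset.sum_congr rfl hterm, geom_sum_if _ _ ?pow he]
  case pow =>
    have h' : d * c * (n / d) = c * (d * (n / d)) := by ring
    rw [← pow_mul, h', hmul, mul_comm, pow_mul, hζ.pow_eq_one, one_pow]
  have hiff : ζ ^ (d * c) = 1 ↔ (n / d) ∣ c := by
    rw [hζ.pow_eq_one_iff_dvd]
    conv_lhs => rw [← hmul]
    exact mul_dvd_mul_iff_left hd0
  split_ifs with h1 h2 h2
  · rfl
  · exact absurd (hiff.mp h1) h2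
  · exact absurd (hiff.mpr h2) h1
  · rfl

lemma charpoly_diagonal' {ι : Type*} [Fintype ι] [DecidableEq ι] (d : ι → ℂ) :
    (Matrix.diagonal d).charpoly = ∏ i, (X - C (d i)) := by
  have h : charmatrix (Matrix.diagonal d) = Matrix.diagonal (fun i => X - C (d i)) := by
    ext i j
    by_cases hij : i = j
    · subst hij; simp
    · rw [charmatrix_apply_ne _ _ _ hij, Matrix.diagonal_apply_ne _ hij,
        Matrix.diagonal_apply_ne _ hij, map_zero, neg_zero]
  rw [Matrix.charpoly, h, Matrix.det_diagonal]

lemma charpoly_conjugate {ι : Type*} [Fintype ι] [DecidableEq ι] (P A : Matrix ι ι ℂ)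
    (hP : IsUnit P.det) : (P * A * P⁻¹).charpoly = A.charpoly := by
  have h1 : P * P⁻¹ = 1 := Matrix.mul_nonsing_inv P hP
  have hmap1 : P.map (C : ℂ →+* ℂ[X]) * (P⁻¹).map (C : ℂ →+* ℂ[X]) = 1 := by
    rw [← Matrix.map_mul, h1, Matrix.map_one _ (map_zero _) (map_one _)]
  have hc : charmatrix (P * A * P⁻¹)
      = P.map (C : ℂ →+* ℂ[X]) * charmatrix A * (P⁻¹).map (C : ℂ →+* ℂ[X]) := by
    unfold charmatrix
    rw [mul_sub, sub_mul]
    congr 1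
    · have hcomm := Matrix.scalar_commute (X : ℂ[X]) (fun r' => Commute.all _ _)
        (P.map (C : ℂ →+* ℂ[X]))
      rw [← hcomm.eq, Matrix.mul_assoc, hmap1, Matrix.mul_one]
    · simp [RingHom.mapMatrix_apply, Matrix.map_mul]
  rw [Matrix.charpoly, Matrix.charpoly, hc, Matrix.det_mul, Matrix.det_mul]
  have hdet : (P.map (C : ℂ →+* ℂ[X])).det * ((P⁻¹).map (C : ℂ →+* ℂ[X])).det = 1 := by
    rw [← Matrix.det_mul, hmap1, Matrix.det_one]
  linear_combination (Matrix.charmatrix A).det * hdet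

/-- let `n` be composite, `k ∣ n` with `2 ≤ k ≤ n-1`, `m ∣ n/k` with
`2 ≤ m ≤ n/k - 1`, and `D = {d ∈ D_n : k ∤ d} ∪ km·D_{n/(km)}`. Then `ICG_n(D)` has
spectrum `{(n - n/k + n/(km) - 1)^(1), (n/(km) - 1)^(km-k), (-n/k + n/(km) - 1)^(k-1),
(-1)^(n-mk)}`; in particular exactly four distinct eigenvalues. -/
theorem stmt_18 (n k m : ℕ) [NeZero n] (hcomp : 2 ≤ n ∧ ¬ n.Prime)
    (hk : k ∣ n) (hk2 : 2 ≤ k) (hk3 : k ≤ n - 1)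
    (hm : m ∣ n / k) (hm2 : 2 ≤ m) (hm3 : m ≤ n / k - 1) :
    (adjMat (ICG n ({d | (d ∣ n ∧ d ≠ n) ∧ ¬ k ∣ d} ∪
        {e | ∃ d' : ℕ, (d' ∣ n / (k * m) ∧ d' ≠ n / (k * m)) ∧ e = k * m * d'}))).charpoly =
        (X - C ((n : ℂ) - ((n / k : ℕ) : ℂ) + ((n / (k * m) : ℕ) : ℂ) - 1))
          * (X - C (((n / (k * m) : ℕ) : ℂ) - 1)) ^ (k * m - k)
          * (X - C (-((n / k : ℕ) : ℂ) + ((n / (k * m) : ℕ) : ℂ) - 1)) ^ (k - 1)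
          * (X + 1) ^ (n - m * k)
      ∧ (spectrum ℂ (adjMat (ICG n ({d | (d ∣ n ∧ d ≠ n) ∧ ¬ k ∣ d} ∪
          {e | ∃ d' : ℕ, (d' ∣ n / (k * m) ∧ d' ≠ n / (k * m)) ∧ e = k * m * d'})))).ncard
        = 4 := by
  obtain ⟨hn2, -⟩ := hcomp
  set Ds : Set ℕ := ({d | (d ∣ n ∧ d ≠ n) ∧ ¬ k ∣ d} ∪
      {e | ∃ d' : ℕ, (d' ∣ n / (k * m) ∧ d' ≠ n / (k * m)) ∧ e = k * m * d'}) with hDs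
  have hn0 : n ≠ 0 := NeZero.ne n
  have hnpos : 0 < n := Nat.pos_of_ne_zero hn0
  have hk0 : 0 < k := by omega
  have hkn : k ≤ n := Nat.le_of_dvd hnpos hk
  have hkmdvd : k * m ∣ n := by
    have h := mul_dvd_mul_left k hm
    rwa [Nat.mul_div_cancel' hk] at h
  have hkm0 : 0 < k * m := by positivity
  have hnk_pos : 0 < n / k := Nat.div_pos hkn hk0
  have hm_lt : m < n / k := by omega
  have hkm_lt : k * m < n := by
    have h : k * m < k * (n / k) := mul_lt_mul_of_pos_left hm_lt hk0
    rwa [Nat.mul_div_cancel' hk] at h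
  have hd1_lt : n / k < n := Nat.div_lt_self hnpos (by omega)
  have hdd : n / (k * m) = n / k / m := (Nat.div_div_eq_div_mul n k m).symm
  have hd2d1 : (n / (k * m)) ∣ (n / k) := by rw [hdd]; exact Nat.div_dvd_of_dvd hm
  have hd2pos : 0 < n / (k * m) := Nat.div_pos (Nat.le_of_dvd hnpos hkmdvd) hkm0
  have hd2_lt_d1 : n / (k * m) < n / k := by rw [hdd]; exact Nat.div_lt_self hnk_pos (by omega)
  have hnn1 : n / (n / k) = k := Nat.div_div_self hk hn0
  have hnn2 : n / (n / (k * m)) = k * m := Nat.div_div_self hkmdvd hn0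
  -- the adjacency function
  set cf : ZMod n → ℂ := fun x => 1 - (if k ∣ x.val then 1 else 0)
      + (if k * m ∣ x.val then 1 else 0) - (if x = 0 then 1 else 0) with hcf
  have hgcd_mem : ∀ v : ℕ, 0 < v → v < n → (Nat.gcd v n ∈ Ds ↔ (¬ k ∣ v ∨ k * m ∣ v)) := by
    intro v hv hvn
    have hgdvd : Nat.gcd v n ∣ n := Nat.gcd_dvd_right v n
    have hgv : Nat.gcd v n ∣ v := Nat.gcd_dvd_left v n
    have hgn : Nat.gcd v n ≠ n := by
      intro h
      have := Nat.le_of_dvd hv hgv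
      omega
    constructor
    · rintro (⟨⟨-, -⟩, hkg⟩ | ⟨d', ⟨-, -⟩, hgd⟩)
      · exact Or.inl (fun hkv => hkg (Nat.dvd_gcd hkv hk))
      · exact Or.inr (Dvd.dvd.trans ⟨d', hgd⟩ hgv)
    · rintro (h | h)
      · exact Or.inl ⟨⟨hgdvd, hgn⟩, fun hkg => h (hkg.trans hgv)⟩
      · right
        have hkmg : k * m ∣ Nat.gcd v n := Nat.dvd_gcd h hkmdvd
        refine ⟨Nat.gcd v n / (k * m), ⟨?_, ?_⟩, (Nat.mul_div_cancel' hkmg).symm⟩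
        · obtain ⟨t, ht⟩ := hgdvd
          refine ⟨t, ?_⟩
          have h2 : n = k * m * (Nat.gcd v n / (k * m) * t) := by
            rw [← mul_assoc, Nat.mul_div_cancel' hkmg]; exact ht
          conv_lhs => rw [h2]
          rw [Nat.mul_div_cancel_left _ hkm0]
        · intro heq
          apply hgn
          conv_lhs => rw [← Nat.mul_div_cancel' hkmg]
          rw [heq, Nat.mul_div_cancel' hkmdvd]
  have hval_pos : ∀ x : ZMod n, x ≠ 0 → 0 < x.val := by
    intro x hx
    exact Nat.pos_of_ne_zero (fun h => hx ((ZMod.val_eq_zero x).mp h))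
  have hval_neg : ∀ x : ZMod n, x ≠ 0 → (-x).val = n - x.val := by
    intro x hx
    rw [ZMod.neg_val']
    have h1 := hval_pos x hx
    have h2 := x.val_lt
    exact Nat.mod_eq_of_lt (by omega)
  have hgcd_neg : ∀ v : ℕ, 0 < v → v < n → Nat.gcd (n - v) n = Nat.gcd v n := by
    intro v hv hvn
    apply Nat.dvd_antisymm
    · apply Nat.dvd_gcd
      · have h3 := Nat.dvd_sub (Nat.gcd_dvd_right (n - v) n) (Nat.gcd_dvd_left (n - v) n)
        rwa [Nat.sub_sub_self (by omega)] at h3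
      · exact Nat.gcd_dvd_right _ _
    · exact Nat.dvd_gcd (Nat.dvd_sub (Nat.gcd_dvd_right v n) (Nat.gcd_dvd_left v n))
        (Nat.gcd_dvd_right _ _)
  have hAdjIff : ∀ i j : ZMod n,
      (ICG n Ds).Adj i j ↔ (i ≠ j ∧ (¬ k ∣ (i - j).val ∨ k * m ∣ (i - j).val)) := by
    intro i j
    rw [ICG, SimpleGraph.fromRel_adj]
    constructor
    · rintro ⟨hij, h | h⟩
      · have hx : i - j ≠ 0 := sub_ne_zero_of_ne hij
        exact ⟨hij, (hgcd_mem _ (hval_pos _ hx) (i - j).val_lt).mp h⟩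
      · have hx : i - j ≠ 0 := sub_ne_zero_of_ne hij
        have hji : j - i = -(i - j) := by ring
        rw [hji, hval_neg _ hx, hgcd_neg _ (hval_pos _ hx) (i - j).val_lt] at h
        exact ⟨hij, (hgcd_mem _ (hval_pos _ hx) (i - j).val_lt).mp h⟩
    · rintro ⟨hij, h⟩
      have hx : i - j ≠ 0 := sub_ne_zero_of_ne hij
      exact ⟨hij, Or.inl ((hgcd_mem _ (hval_pos _ hx) (i - j).val_lt).mpr h)⟩
  have hA : adjMat (ICG n Ds) = Matrix.of (fun i j : ZMod n => cf (i - j)) := by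
    ext i j
    simp only [adjMat, Matrix.of_apply]
    by_cases hij : i = j
    · subst hij
      rw [if_neg (SimpleGraph.irrefl _), hcf]
      simp [sub_self, ZMod.val_zero]
    · have hx : i - j ≠ 0 := sub_ne_zero_of_ne hij
      rw [hcf]
      by_cases h1 : k ∣ (i - j).val
      · by_cases h2 : k * m ∣ (i - j).val
        · rw [if_pos ((hAdjIff i j).mpr ⟨hij, Or.inr h2⟩)]
          simp [h1, h2, hx]
        · rw [if_neg (fun hadj => by
            rcases ((hAdjIff i j).mp hadj).2 with h | h
            · exact h h1
            · exact h2 h)]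
          simp [h1, h2, hx]
      · have h2 : ¬ (k * m ∣ (i - j).val) := fun h => h1 ((dvd_mul_right k m).trans h)
        rw [if_pos ((hAdjIff i j).mpr ⟨hij, Or.inl h1⟩)]
        simp [h1, h2, hx]
  set ζ : ℂ := Complex.exp (2 * Real.pi * Complex.I / n) with hζdef
  have hζ : IsPrimitiveRoot ζ n := Complex.isPrimitiveRoot_exp n hn0
  have hζ1 : ζ ^ n = 1 := hζ.pow_eq_one
  set F : Matrix (ZMod n) (ZMod n) ℂ := Matrix.of (fun i j : ZMod n => ζ ^ (i.val * j.val))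
    with hF
  set lam : ZMod n → ℂ := fun j =>
    (if j = 0 then (n : ℂ) else 0) - (if n / k ∣ j.val then ((n / k : ℕ) : ℂ) else 0)
      + (if n / (k * m) ∣ j.val then ((n / (k * m) : ℕ) : ℂ) else 0) - 1 with hlam
  have hS : ∀ j : ZMod n, (∑ y : ZMod n, cf y * ζ ^ (y.val * j.val)) = lam j := by
    intro j
    have e1 : (∑ y : ZMod n, ζ ^ (y.val * j.val)) = if j = 0 then (n : ℂ) else 0 := by
      have h := charSum n ζ hζ 1 (one_dvd n) j.val
      simp only [Nat.one_dvd, if_true, Nat.div_one] at h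
      rw [h]
      by_cases hj : j = 0
      · rw [if_pos hj, if_pos (by rw [hj, ZMod.val_zero]; exact dvd_zero n)]
      · rw [if_neg hj, if_neg (fun hh => hj ((ZMod.val_eq_zero j).mp
          (Nat.eq_zero_of_dvd_of_lt hh j.val_lt)))]
    have e2 := charSum n ζ hζ k hk j.val
    have e3 := charSum n ζ hζ (k * m) hkmdvd j.val
    have e4 : (∑ y : ZMod n, (if y = 0 then (1 : ℂ) else 0) * ζ ^ (y.val * j.val)) = 1 := by
      have hpt : ∀ y : ZMod n, (if y = 0 then (1 : ℂ) else 0) * ζ ^ (y.val * j.val)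
          = if y = 0 then ζ ^ (y.val * j.val) else 0 := by
        intro y; split_ifs <;> simp
      rw [Finset.sum_congr rfl (fun y _ => hpt y), Finset.sum_ite_eq' Finset.univ (0 : ZMod n)]
      simp
    have hpt : ∀ y : ZMod n, cf y * ζ ^ (y.val * j.val)
        = ζ ^ (y.val * j.val) - (if k ∣ y.val then ζ ^ (y.val * j.val) else 0)
          + (if k * m ∣ y.val then ζ ^ (y.val * j.val) else 0)
          - (if y = 0 then (1 : ℂ) else 0) * ζ ^ (y.val * j.val) := by
      intro y; rw [hcf]; simp only; split_ifs <;> ring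
    rw [Finset.sum_congr rfl (fun y _ => hpt y), Finset.sum_sub_distrib,
      Finset.sum_add_distrib, Finset.sum_sub_distrib, e1, e2, e3, e4, hlam]
  have hcfneg : ∀ y : ZMod n, cf (-y) = cf y := by
    intro y
    by_cases hy : y = 0
    · rw [hy, neg_zero]
    · have hv := hval_neg y hy
      have h1 := hval_pos y hy
      have h2 := y.val_lt
      have hdual : ∀ d : ℕ, d ∣ n → ((d ∣ (-y).val) ↔ (d ∣ y.val)) := by
        intro d hd
        rw [hv]
        constructor
        · intro h
          have h3 := Nat.dvd_sub hd h
          rwa [Nat.sub_sub_self (by omega)] at h3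
        · intro h
          exact Nat.dvd_sub hd h
      have h0 : ((-y : ZMod n) = 0) ↔ (y = 0) := neg_eq_zero
      rw [hcf]
      simp only [hdual k hk, hdual (k * m) hkmdvd, h0]
  have hcolumn : adjMat (ICG n Ds) * F = F * Matrix.diagonal lam := by
    ext i j
    rw [Matrix.mul_apply, Matrix.mul_diagonal, hA]
    simp only [Matrix.of_apply, hF]
    have step1 : (∑ x : ZMod n, cf (i - x) * ζ ^ (x.val * j.val))
        = ∑ y : ZMod n, cf y * ζ ^ ((i - y).val * j.val) := by
      refine (Fintype.sum_equiv (Equiv.subLeft i)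
        (fun y => cf y * ζ ^ ((i - y).val * j.val))
        (fun x => cf (i - x) * ζ ^ (x.val * j.val)) ?_).symm
      intro y
      simp only [Equiv.subLeft_apply, sub_sub_cancel]
    have step2 : ∀ y : ZMod n, ζ ^ ((i - y).val * j.val)
        = ζ ^ (i.val * j.val) * ζ ^ ((-y).val * j.val) := by
      intro y
      rw [← pow_add]
      apply zpow_congr ζ hζ1
      have h1 : (i - y).val ≡ i.val + (-y).val [MOD n] := by
        rw [sub_eq_add_neg, ZMod.val_add]
        exact Nat.mod_modEq _ n
      have h2 := h1.mul_right j.val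
      rwa [add_mul] at h2
    have step3 : (∑ y : ZMod n, cf y * ζ ^ ((-y).val * j.val))
        = ∑ y : ZMod n, cf y * ζ ^ (y.val * j.val) := by
      refine Fintype.sum_equiv (Equiv.neg (ZMod n))
        (fun y => cf y * ζ ^ ((-y).val * j.val))
        (fun y => cf y * ζ ^ (y.val * j.val)) ?_
      intro y
      simp only [Equiv.neg_apply]
      rw [hcfneg y]
    rw [step1, Finset.sum_congr rfl (fun y _ => by rw [step2 y]; ring :
      ∀ y ∈ Finset.univ, cf y * ζ ^ ((i - y).val * j.val)
        = ζ ^ (i.val * j.val) * (cf y * ζ ^ ((-y).val * j.val))),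
      ← Finset.mul_sum, step3, hS j]
  have hdetF : IsUnit F.det := by
    let e : Fin n ≃ ZMod n :=
      { toFun := fun i => (i : ℕ)
        invFun := fun x => ⟨x.val, x.val_lt⟩
        left_inv := fun i => by
          ext
          simp [ZMod.val_cast_of_lt i.isLt]
        right_inv := fun x => by
          simp [ZMod.natCast_rightInverse x] }
    have hFr : F = (Matrix.reindex e e) (Matrix.vandermonde (fun i : Fin n => ζ ^ (i : ℕ))) := by
      ext x y
      simp only [Matrix.reindex_apply, Matrix.submatrix_apply, Matrix.vandermonde, hF,
        Matrix.of_apply]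
      rw [← pow_mul]
      rfl
    rw [hFr, Matrix.det_reindex_self, isUnit_iff_ne_zero, Ne, Matrix.det_vandermonde_eq_zero_iff]
    rintro ⟨i, j, hij, hne⟩
    exact hne (Fin.ext (hζ.pow_inj i.isLt j.isLt hij))
  have hAeq : adjMat (ICG n Ds) = F * Matrix.diagonal lam * F⁻¹ := by
    rw [← hcolumn, Matrix.mul_assoc, Matrix.mul_nonsing_inv F hdetF, Matrix.mul_one]
  -- predicates and counts
  have himp1 : ∀ j : ZMod n, (n / k) ∣ j.val → (n / (k * m)) ∣ j.val :=
    fun j h => hd2d1.trans h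
  have himp0 : ∀ j : ZMod n, j = 0 → (n / k) ∣ j.val := by
    intro j h
    rw [h, ZMod.val_zero]
    exact dvd_zero _
  have hcard_univ : (Finset.univ : Finset (ZMod n)).card = n := by
    rw [Finset.card_univ, ZMod.card]
  have c2 : (Finset.univ.filter (fun j : ZMod n => (n / (k * m)) ∣ j.val)).card = k * m := by
    rw [multiples_card n _ (Nat.div_dvd_of_dvd hkmdvd), hnn2]
  have c3 : (Finset.univ.filter (fun j : ZMod n => (n / k) ∣ j.val)).card = k := by
    rw [multiples_card n _ (Nat.div_dvd_of_dvd hk), hnn1]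
  -- values of lam
  have lam0 : lam 0 = (n : ℂ) - ((n / k : ℕ) : ℂ) + ((n / (k * m) : ℕ) : ℂ) - 1 := by
    rw [hlam]
    simp only [ZMod.val_zero, if_pos rfl, if_pos (dvd_zero _)]
    norm_num
  have lam3 : ∀ j : ZMod n, (n / k) ∣ j.val → j ≠ 0 →
      lam j = -((n / k : ℕ) : ℂ) + ((n / (k * m) : ℕ) : ℂ) - 1 := by
    intro j h3 h0
    rw [hlam]
    simp only [if_neg h0, if_pos h3, if_pos (himp1 j h3)]
    ring
  have lam2 : ∀ j : ZMod n, (n / (k * m)) ∣ j.val → ¬ (n / k) ∣ j.val →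
      lam j = ((n / (k * m) : ℕ) : ℂ) - 1 := by
    intro j h2 h3
    have h0 : j ≠ 0 := fun h => h3 (himp0 j h)
    rw [hlam]
    simp only [if_neg h0, if_neg h3, if_pos h2]
    ring
  have lam4 : ∀ j : ZMod n, ¬ (n / (k * m)) ∣ j.val → lam j = -1 := by
    intro j h2
    have h3 : ¬ (n / k) ∣ j.val := fun h => h2 (himp1 j h)
    have h0 : j ≠ 0 := fun h => h3 (himp0 j h)
    rw [hlam]
    simp only [if_neg h0, if_neg h3, if_neg h2]
    ring
  constructor
  · -- characteristic polynomial
    rw [hAeq, charpoly_conjugate _ _ hdetF, charpoly_diagonal']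
    rw [← Finset.prod_filter_mul_prod_filter_not Finset.univ
      (fun j : ZMod n => (n / (k * m)) ∣ j.val)]
    have hf4 : ∀ j ∈ Finset.univ.filter (fun j : ZMod n => ¬ (n / (k * m)) ∣ j.val),
        X - C (lam j) = X + 1 := by
      intro j hj
      simp only [Finset.mem_filter] at hj
      rw [lam4 j hj.2, map_neg, _root_.map_one, sub_neg_eq_add]
    rw [Finset.prod_congr rfl hf4, Finset.prod_const]
    have cc4 : (Finset.univ.filter (fun j : ZMod n => ¬ (n / (k * m)) ∣ j.val)).card
        = n - m * k := by
      have h := Finset.card_filter_add_card_filter_not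
        (s := (Finset.univ : Finset (ZMod n))) (p := fun j : ZMod n => (n / (k * m)) ∣ j.val)
      rw [hcard_univ, c2] at h
      have hmk : m * k = k * m := Nat.mul_comm m k
      omega
    rw [cc4]
    rw [← Finset.prod_filter_mul_prod_filter_not
      (Finset.univ.filter (fun j : ZMod n => (n / (k * m)) ∣ j.val))
      (fun j : ZMod n => (n / k) ∣ j.val)]
    have hff : (Finset.univ.filter (fun j : ZMod n => (n / (k * m)) ∣ j.val)).filter
        (fun j : ZMod n => (n / k) ∣ j.val)
        = Finset.univ.filter (fun j : ZMod n => (n / k) ∣ j.val) := by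
      rw [Finset.filter_filter]
      apply Finset.filter_congr
      intro j _
      simp only [and_iff_right_iff_imp]
      exact fun h => himp1 j h
    rw [hff]
    have hf2 : ∀ j ∈ (Finset.univ.filter (fun j : ZMod n => (n / (k * m)) ∣ j.val)).filter
        (fun j : ZMod n => ¬ (n / k) ∣ j.val),
        X - C (lam j) = X - C (((n / (k * m) : ℕ) : ℂ) - 1) := by
      intro j hj
      simp only [Finset.mem_filter] at hj
      rw [lam2 j hj.1.2 hj.2]
    rw [Finset.prod_congr rfl hf2, Finset.prod_const]
    have cc2 : ((Finset.univ.filter (fun j : ZMod n => (n / (k * m)) ∣ j.val)).filter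
        (fun j : ZMod n => ¬ (n / k) ∣ j.val)).card = k * m - k := by
      have h := Finset.card_filter_add_card_filter_not
        (s := Finset.univ.filter (fun j : ZMod n => (n / (k * m)) ∣ j.val))
        (p := fun j : ZMod n => (n / k) ∣ j.val)
      rw [hff, c2, c3] at h
      omega
    rw [cc2]
    rw [← Finset.prod_filter_mul_prod_filter_not
      (Finset.univ.filter (fun j : ZMod n => (n / k) ∣ j.val)) (fun j : ZMod n => j = 0)]
    have hsing : (Finset.univ.filter (fun j : ZMod n => (n / k) ∣ j.val)).filter
        (fun j : ZMod n => j = 0) = {0} := by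
      ext j
      simp only [Finset.mem_filter, Finset.mem_univ, true_and, Finset.mem_singleton]
      constructor
      · exact fun h => h.2
      · rintro rfl
        exact ⟨himp0 0 rfl, rfl⟩
    rw [hsing, Finset.prod_singleton, lam0]
    have hf3 : ∀ j ∈ (Finset.univ.filter (fun j : ZMod n => (n / k) ∣ j.val)).filter
        (fun j : ZMod n => ¬ j = 0),
        X - C (lam j) = X - C (-((n / k : ℕ) : ℂ) + ((n / (k * m) : ℕ) : ℂ) - 1) := by
      intro j hj
      simp only [Finset.mem_filter] at hj
      rw [lam3 j hj.1.2 hj.2]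
    rw [Finset.prod_congr rfl hf3, Finset.prod_const]
    have cc3 : ((Finset.univ.filter (fun j : ZMod n => (n / k) ∣ j.val)).filter
        (fun j : ZMod n => ¬ j = 0)).card = k - 1 := by
      have h := Finset.card_filter_add_card_filter_not
        (s := Finset.univ.filter (fun j : ZMod n => (n / k) ∣ j.val))
        (p := fun j : ZMod n => j = 0)
      rw [hsing, c3] at h
      simp only [Finset.card_singleton] at h
      omega
    rw [cc3]
    ring
  · -- spectrum
    have hspec : spectrum ℂ (adjMat (ICG n Ds)) = Set.range lam := by
      rw [hAeq]
      have hFu : IsUnit F := (Matrix.isUnit_iff_isUnit_det F).mpr hdetF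
      have hU : (hFu.unit : Matrix (ZMod n) (ZMod n) ℂ) = F := hFu.unit_spec
      have hUinv : ((hFu.unit⁻¹ : (Matrix (ZMod n) (ZMod n) ℂ)ˣ) : Matrix (ZMod n) (ZMod n) ℂ)
          = F⁻¹ := by
        rw [Matrix.coe_units_inv, hU]
      have hconj := spectrum.units_conjugate (R := ℂ) (a := Matrix.diagonal lam)
        (u := hFu.unit)
      rw [hU, hUinv] at hconj
      rw [hconj, spectrum_diagonal]
    have hrange : Set.range lam =
        {(n : ℂ) - ((n / k : ℕ) : ℂ) + ((n / (k * m) : ℕ) : ℂ) - 1,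
         ((n / (k * m) : ℕ) : ℂ) - 1,
         -((n / k : ℕ) : ℂ) + ((n / (k * m) : ℕ) : ℂ) - 1, (-1 : ℂ)} := by
      ext μ
      simp only [Set.mem_range, Set.mem_insert_iff, Set.mem_singleton_iff]
      constructor
      · rintro ⟨j, rfl⟩
        by_cases h3 : (n / k) ∣ j.val
        · by_cases h0 : j = 0
          · subst h0
            exact Or.inl lam0
          · exact Or.inr (Or.inr (Or.inl (lam3 j h3 h0)))
        · by_cases h2 : (n / (k * m)) ∣ j.val
          · exact Or.inr (Or.inl (lam2 j h2 h3))
          · exact Or.inr (Or.inr (Or.inr (lam4 j h2)))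
      · have hval1 : ((n / k : ℕ) : ZMod n).val = n / k := ZMod.val_cast_of_lt hd1_lt
        have hval2 : ((n / (k * m) : ℕ) : ZMod n).val = n / (k * m) :=
          ZMod.val_cast_of_lt (hd2_lt_d1.trans hd1_lt)
        have hvalone : (1 : ZMod n).val = 1 := by
          rw [← Nat.cast_one, ZMod.val_cast_of_lt (by omega)]
        rintro (rfl | rfl | rfl | rfl)
        · exact ⟨0, lam0⟩
        · refine ⟨((n / (k * m) : ℕ) : ZMod n), ?_⟩
          apply lam2
          · rw [hval2]
          · rw [hval2]
            intro h
            exact absurd (Nat.le_of_dvd hd2pos h) (by omega)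
        · refine ⟨((n / k : ℕ) : ZMod n), ?_⟩
          apply lam3
          · rw [hval1]
          · intro h
            rw [h, ZMod.val_zero] at hval1
            omega
        · refine ⟨1, ?_⟩
          apply lam4
          rw [hvalone]
          intro h
          have hd2one : n / (k * m) = 1 := Nat.dvd_one.mp h
          have := Nat.mul_div_cancel' hkmdvd
          rw [hd2one, Nat.mul_one] at this
          omega
    rw [hspec, hrange]
    -- distinctness
    have d12 : (n : ℂ) - ((n / k : ℕ) : ℂ) + ((n / (k * m) : ℕ) : ℂ) - 1
        ≠ ((n / (k * m) : ℕ) : ℂ) - 1 := by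
      intro h
      have h2 : (n : ℂ) = ((n / k : ℕ) : ℂ) := by linear_combination h
      have h3 : n = n / k := by exact_mod_cast h2
      omega
    have d13 : (n : ℂ) - ((n / k : ℕ) : ℂ) + ((n / (k * m) : ℕ) : ℂ) - 1
        ≠ -((n / k : ℕ) : ℂ) + ((n / (k * m) : ℕ) : ℂ) - 1 := by
      intro h
      have h2 : (n : ℂ) = 0 := by linear_combination h
      have h3 : n = 0 := by exact_mod_cast h2
      omega
    have d14 : (n : ℂ) - ((n / k : ℕ) : ℂ) + ((n / (k * m) : ℕ) : ℂ) - 1 ≠ (-1 : ℂ) := by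
      intro h
      have h2 : ((n + n / (k * m) : ℕ) : ℂ) = ((n / k : ℕ) : ℂ) := by
        push_cast
        linear_combination h
      have h3 : n + n / (k * m) = n / k := by exact_mod_cast h2
      omega
    have d23 : ((n / (k * m) : ℕ) : ℂ) - 1
        ≠ -((n / k : ℕ) : ℂ) + ((n / (k * m) : ℕ) : ℂ) - 1 := by
      intro h
      have h2 : ((n / k : ℕ) : ℂ) = 0 := by linear_combination h
      have h3 : n / k = 0 := by exact_mod_cast h2
      omega
    have d24 : ((n / (k * m) : ℕ) : ℂ) - 1 ≠ (-1 : ℂ) := by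
      intro h
      have h2 : ((n / (k * m) : ℕ) : ℂ) = 0 := by linear_combination h
      have h3 : n / (k * m) = 0 := by exact_mod_cast h2
      omega
    have d34 : -((n / k : ℕ) : ℂ) + ((n / (k * m) : ℕ) : ℂ) - 1 ≠ (-1 : ℂ) := by
      intro h
      have h2 : ((n / (k * m) : ℕ) : ℂ) = ((n / k : ℕ) : ℂ) := by linear_combination h
      have h3 : n / (k * m) = n / k := by exact_mod_cast h2
      omega
    rw [Set.ncard_insert_of_notMem (by simp [d12, d13, d14]),
      Set.ncard_insert_of_notMem (by simp [d23, d24]),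
      Set.ncard_insert_of_notMem (by simp [d34]),
      Set.ncard_singleton]
end
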